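/- arXiv:2006.16506 — 4 statements merged into one kernel-verified Lean document; each statement's English description precedes it below -/
import Mathlib

section
/- Let p ≥ 1, let a, b : [0,∞) → ℝ be nonnegative nondecreasing continuous functions, and let l be a nonnegative function continuous on (0,∞) and locally integrable on [0,∞). If u is a continuous nonnegative function on [0,∞) satisfying u(t) ≤ a(t) + b(t)(∫₀ᵗ l(s) u(s)^p ds)^{1/p} for all t ∈ [0,∞), then u(t) ≤ 2^{1-1/p} a(t) exp((2^{p-1} b(t)^p / p) ∫₀ᵗ l(s) ds) for all t ∈ [0,∞). -/
open MeasureTheory Set Filter Topology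

private lemma key_ineq {x y : ℝ} (hx : 0 ≤ x) (hy : 0 ≤ y) {p : ℝ} (hp : 1 ≤ p) :
    (x + y) ^ p ≤ (2:ℝ) ^ (p - 1) * (x ^ p + y ^ p) := by
  have h := NNReal.rpow_add_le_mul_rpow_add_rpow x.toNNReal y.toNNReal hp
  have h2 := NNReal.coe_le_coe.2 h
  push_cast at h2
  rwa [Real.coe_toNNReal x hx, Real.coe_toNNReal y hy] at h2

/-- Corollary 2.2, case γ = 1:
`u(t) ≤ a(t) + b(t)(∫₀ᵗ l(s) u(s)^p ds)^{1/p}` implies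
`u(t) ≤ 2^{1-1/p} a(t) exp((2^{p-1} b(t)^p / p) ∫₀ᵗ l(s) ds)`. -/
theorem stmt1 (p : ℝ) (hp : 1 ≤ p)
    (a b l u : ℝ → ℝ)
    (ha_cont : ContinuousOn a (Ici 0)) (ha_mono : MonotoneOn a (Ici 0))
    (ha_nonneg : ∀ t ∈ Ici (0:ℝ), 0 ≤ a t)
    (hb_cont : ContinuousOn b (Ici 0)) (hb_mono : MonotoneOn b (Ici 0))
    (hb_nonneg : ∀ t ∈ Ici (0:ℝ), 0 ≤ b t)
    (hl_cont : ContinuousOn l (Ioi 0)) (hl_nonneg : ∀ t ∈ Ioi (0:ℝ), 0 ≤ l t)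
    (hl_int : ∀ t : ℝ, 0 ≤ t → IntervalIntegrable l volume 0 t)
    (hu_cont : ContinuousOn u (Ici 0)) (hu_nonneg : ∀ t ∈ Ici (0:ℝ), 0 ≤ u t)
    (hu : ∀ t ∈ Ici (0:ℝ),
      u t ≤ a t + b t * (∫ s in (0:ℝ)..t, l s * u s ^ p) ^ (1/p)) :
    ∀ t ∈ Ici (0:ℝ),
      u t ≤ (2:ℝ) ^ (1 - 1/p) * a t *
        Real.exp (((2:ℝ) ^ (p - 1) * b t ^ p / p) * ∫ s in (0:ℝ)..t, l s) := by
  have hp0 : (0:ℝ) < p := lt_of_lt_of_le one_pos hp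
  have hq0 : (0:ℝ) < 1/p := by positivity
  have h2rpow : (1:ℝ) ≤ (2:ℝ) ^ (1 - 1/p) := by
    apply Real.one_le_rpow one_le_two
    have : 1/p ≤ 1 := by rw [div_le_one hp0]; exact hp
    linarith
  intro T hT
  simp only [mem_Ici] at hT
  have haT : 0 ≤ a T := ha_nonneg T (mem_Ici.2 hT)
  -- integrability of the integrand
  have hup_cont : ContinuousOn (fun s => u s ^ p) (Ici 0) :=
    hu_cont.rpow_const (fun x _ => Or.inr hp0.le)
  have hvint : ∀ t : ℝ, 0 ≤ t → IntervalIntegrable (fun s => l s * u s ^ p) volume 0 t := by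
    intro t ht
    exact (hl_int t ht).mul_continuousOn
      (hup_cont.mono (by rw [uIcc_of_le ht]; exact Icc_subset_Ici_self))
  set v : ℝ → ℝ := fun t => ∫ s in (0:ℝ)..t, l s * u s ^ p with hv
  set L : ℝ → ℝ := fun t => ∫ s in (0:ℝ)..t, l s with hL
  have hvnn : ∀ t : ℝ, 0 ≤ t → 0 ≤ v t := by
    intro t ht
    rw [hv]
    simp only
    rw [intervalIntegral.integral_of_le ht]
    apply setIntegral_nonneg measurableSet_Ioc
    intro s hs
    exact mul_nonneg (hl_nonneg s hs.1) (Real.rpow_nonneg (hu_nonneg s (le_of_lt hs.1)) p)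
  have hLnn : 0 ≤ L T := by
    rw [hL]
    simp only
    rw [intervalIntegral.integral_of_le hT]
    apply setIntegral_nonneg measurableSet_Ioc
    intro s hs
    exact hl_nonneg s hs.1
  by_cases hbT : b T = 0
  · -- easy case : b T = 0
    have huT : u T ≤ a T := by
      have := hu T (mem_Ici.2 hT)
      rw [hbT] at this
      simpa using this
    rw [hbT, Real.zero_rpow hp0.ne']
    simp only [mul_zero, zero_div, zero_mul, Real.exp_zero, mul_one]
    calc u T ≤ a T := huT
      _ = 1 * a T := (one_mul _).symm
      _ ≤ (2:ℝ) ^ (1 - 1/p) * a T := mul_le_mul_of_nonneg_right h2rpow haT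
  · -- main case
    have hbT' : 0 < b T := lt_of_le_of_ne (hb_nonneg T (mem_Ici.2 hT)) (Ne.symm hbT)
    set α : ℝ := (2:ℝ) ^ (p - 1) * a T ^ p with hα
    set β : ℝ := (2:ℝ) ^ (p - 1) * b T ^ p with hβ
    have hβpos : 0 < β :=
      mul_pos (Real.rpow_pos_of_pos two_pos _) (Real.rpow_pos_of_pos hbT' p)
    have hαnn : 0 ≤ α :=
      mul_nonneg (Real.rpow_nonneg (by norm_num) _) (Real.rpow_nonneg haT p)
    -- pointwise bound on u^p
    have hkey : ∀ t : ℝ, 0 ≤ t → t ≤ T → u t ^ p ≤ α + β * v t := by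
      intro t ht htT
      have hat : 0 ≤ a t := ha_nonneg t (mem_Ici.2 ht)
      have hbt : 0 ≤ b t := hb_nonneg t (mem_Ici.2 ht)
      have hvt : 0 ≤ v t := hvnn t ht
      have h4 : (b t * v t ^ (1/p)) ^ p = b t ^ p * v t := by
        rw [Real.mul_rpow hbt (Real.rpow_nonneg hvt _), ← Real.rpow_mul hvt,
          one_div_mul_cancel hp0.ne', Real.rpow_one]
      have ha' : a t ^ p ≤ a T ^ p :=
        Real.rpow_le_rpow hat (ha_mono (mem_Ici.2 ht) (mem_Ici.2 hT) htT) hp0.le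
      have hb' : b t ^ p ≤ b T ^ p :=
        Real.rpow_le_rpow hbt (hb_mono (mem_Ici.2 ht) (mem_Ici.2 hT) htT) hp0.le
      calc u t ^ p ≤ (a t + b t * v t ^ (1/p)) ^ p :=
            Real.rpow_le_rpow (hu_nonneg t (mem_Ici.2 ht)) (hu t (mem_Ici.2 ht)) hp0.le
        _ ≤ (2:ℝ) ^ (p-1) * (a t ^ p + (b t * v t ^ (1/p)) ^ p) :=
            key_ineq hat (mul_nonneg hbt (Real.rpow_nonneg hvt _)) hp
        _ = (2:ℝ) ^ (p-1) * (a t ^ p + b t ^ p * v t) := by rw [h4]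
        _ ≤ (2:ℝ) ^ (p-1) * (a T ^ p + b T ^ p * v t) := by
            have h2nn : (0:ℝ) ≤ (2:ℝ) ^ (p-1) := Real.rpow_nonneg (by norm_num) _
            apply mul_le_mul_of_nonneg_left _ h2nn
            have := mul_le_mul_of_nonneg_right hb' hvt
            linarith
        _ = α + β * v t := by rw [hα, hβ]; ring
    -- the auxiliary function g
    set g : ℝ → ℝ := fun t => (v t + α/β) * Real.exp (-(β * L t)) with hg
    have hvcont : ContinuousOn v (Icc 0 T) := by
      have := intervalIntegral.continuousOn_primitive_interval' (hvint T hT)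
        (left_mem_uIcc (a := (0:ℝ)) (b := T))
      rwa [uIcc_of_le hT] at this
    have hLcont : ContinuousOn L (Icc 0 T) := by
      have := intervalIntegral.continuousOn_primitive_interval' (hl_int T hT)
        (left_mem_uIcc (a := (0:ℝ)) (b := T))
      rwa [uIcc_of_le hT] at this
    have hgcont : ContinuousOn g (Icc 0 T) :=
      (hvcont.add continuousOn_const).mul
        (Real.continuous_exp.comp_continuousOn ((continuousOn_const.mul hLcont).neg))
    have hgderiv : ∀ t ∈ Ioo (0:ℝ) T,
        HasDerivAt g ((l t * u t ^ p - β * l t * (v t + α/β)) * Real.exp (-(β * L t))) t := by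
      intro t ht
      have hmeasl : StronglyMeasurableAtFilter l (𝓝 t) volume :=
        hl_cont.stronglyMeasurableAtFilter isOpen_Ioi t ht.1
      have hfcont : ContinuousOn (fun s => l s * u s ^ p) (Ioi 0) :=
        hl_cont.mul (hup_cont.mono Ioi_subset_Ici_self)
      have hmeasf : StronglyMeasurableAtFilter (fun s => l s * u s ^ p) (𝓝 t) volume :=
        hfcont.stronglyMeasurableAtFilter isOpen_Ioi t ht.1
      have hLd : HasDerivAt L (l t) t :=
        intervalIntegral.integral_hasDerivAt_right (hl_int t ht.1.le) hmeasl
          (hl_cont.continuousAt (Ioi_mem_nhds ht.1))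
      have hvd : HasDerivAt v (l t * u t ^ p) t :=
        intervalIntegral.integral_hasDerivAt_right (hvint t ht.1.le) hmeasf
          (hfcont.continuousAt (Ioi_mem_nhds ht.1))
      have he : HasDerivAt (fun s => Real.exp (-(β * L s)))
          (Real.exp (-(β * L t)) * (-(β * l t))) t := ((hLd.const_mul β).neg).exp
      have := (hvd.add_const (α/β)).fun_mul he
      rw [show (l t * u t ^ p - β * l t * (v t + α/β)) * Real.exp (-(β * L t)) =
          l t * u t ^ p * Real.exp (-(β * L t)) + (v t + α / β) * (Real.exp (-(β * L t)) * -(β * l t)) by ring]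
      exact this
    have hganti : AntitoneOn g (Icc 0 T) := by
      apply antitoneOn_of_deriv_nonpos (convex_Icc 0 T) hgcont
      · rw [interior_Icc]
        intro t ht
        exact ((hgderiv t ht).differentiableAt).differentiableWithinAt
      · rw [interior_Icc]
        intro t ht
        rw [(hgderiv t ht).deriv]
        have hlt : 0 ≤ l t := hl_nonneg t ht.1
        have hupt : u t ^ p ≤ α + β * v t := hkey t ht.1.le ht.2.le
        have hfac : β * (v t + α/β) = β * v t + α := by field_simp
        have hnonpos : l t * u t ^ p - β * l t * (v t + α/β) ≤ 0 := by
          have h1 : l t * u t ^ p ≤ l t * (α + β * v t) :=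
            mul_le_mul_of_nonneg_left hupt hlt
          have h2 : β * l t * (v t + α/β) = l t * (α + β * v t) := by
            field_simp; ring
          linarith
        exact mul_nonpos_of_nonpos_of_nonneg hnonpos (Real.exp_pos _).le
    have hg0 : g 0 = α/β := by
      rw [hg]
      simp only
      rw [hv, hL]
      simp [intervalIntegral.integral_same]
    have hgT : g T ≤ α/β := by
      rw [← hg0]
      exact hganti (left_mem_Icc.2 hT) (right_mem_Icc.2 hT) hT
    have hvT : v T ≤ α/β * (Real.exp (β * L T) - 1) := by
      have h' := mul_le_mul_of_nonneg_right hgT (Real.exp_pos (β * L T)).le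
      rw [hg] at h'
      simp only at h'
      rw [mul_assoc, ← Real.exp_add, neg_add_cancel, Real.exp_zero, mul_one] at h'
      have : α/β * (Real.exp (β * L T) - 1) = α/β * Real.exp (β * L T) - α/β := by ring
      linarith
    set w : ℝ := Real.exp (β * L T) - 1 with hwdef
    have hw : 0 ≤ w := by
      have : (1:ℝ) ≤ Real.exp (β * L T) :=
        Real.one_le_exp_iff.2 (mul_nonneg hβpos.le hLnn)
      simp only [hwdef]
      linarith
    have habnn : 0 ≤ a T / b T := div_nonneg haT hbT'.le
    have huT : u T ≤ a T * (1 + w ^ (1/p)) := by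
      have h1 := hu T (mem_Ici.2 hT)
      have hαβ : α/β = (a T / b T) ^ p := by
        rw [hα, hβ, Real.div_rpow haT hbT'.le]
        rw [mul_div_mul_left _ _ (Real.rpow_pos_of_pos two_pos (p-1)).ne']
      have hvTw : v T ≤ (a T / b T) ^ p * w := by rw [← hαβ]; exact hvT
      have h2' : v T ^ (1/p) ≤ (a T / b T) * w ^ (1/p) := by
        calc v T ^ (1/p) ≤ ((a T / b T) ^ p * w) ^ (1/p) :=
              Real.rpow_le_rpow (hvnn T hT) hvTw hq0.le
          _ = (a T / b T) * w ^ (1/p) := by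
              rw [Real.mul_rpow (Real.rpow_nonneg habnn p) hw, ← Real.rpow_mul habnn,
                mul_one_div_cancel hp0.ne', Real.rpow_one]
      have h3' : b T * v T ^ (1/p) ≤ a T * w ^ (1/p) := by
        have := mul_le_mul_of_nonneg_left h2' hbT'.le
        rwa [← mul_assoc, mul_div_cancel₀ _ hbT] at this
      calc u T ≤ a T + b T * v T ^ (1/p) := h1
        _ ≤ a T + a T * w ^ (1/p) := by linarith
        _ = a T * (1 + w ^ (1/p)) := by ring
    have h1w : (0:ℝ) ≤ 1 + w ^ (1/p) := by positivity
    have h3 : 1 + w ^ (1/p) ≤ (2:ℝ) ^ (1 - 1/p) * (1 + w) ^ (1/p) := by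
      have hA : (1 + w ^ (1/p)) ^ p ≤ (2:ℝ) ^ (p-1) * (1 + w) := by
        have hk := key_ineq (zero_le_one) (Real.rpow_nonneg hw (1/p)) hp
        rwa [Real.one_rpow, ← Real.rpow_mul hw, one_div_mul_cancel hp0.ne',
          Real.rpow_one] at hk
      have hexp : (p - 1) * (1/p) = 1 - 1/p := by field_simp
      calc 1 + w ^ (1/p) = ((1 + w ^ (1/p)) ^ p) ^ (1/p) := by
            rw [← Real.rpow_mul h1w, mul_one_div_cancel hp0.ne', Real.rpow_one]
        _ ≤ ((2:ℝ) ^ (p-1) * (1 + w)) ^ (1/p) :=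
            Real.rpow_le_rpow (Real.rpow_nonneg h1w p) hA hq0.le
        _ = (2:ℝ) ^ (1 - 1/p) * (1 + w) ^ (1/p) := by
            rw [Real.mul_rpow (Real.rpow_nonneg (by norm_num) _) (by linarith),
              ← Real.rpow_mul (by norm_num : (0:ℝ) ≤ 2), hexp]
    have h4 : (1 + w) ^ (1/p) =
        Real.exp (((2:ℝ) ^ (p - 1) * b T ^ p / p) * L T) := by
      have h1w' : 1 + w = Real.exp (β * L T) := by rw [hwdef]; ring
      rw [h1w', ← Real.exp_mul]
      congr 1
      rw [hβ]
      ring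
    calc u T ≤ a T * (1 + w ^ (1/p)) := huT
      _ ≤ a T * ((2:ℝ) ^ (1 - 1/p) * (1 + w) ^ (1/p)) := mul_le_mul_of_nonneg_left h3 haT
      _ = (2:ℝ) ^ (1 - 1/p) * a T *
          Real.exp (((2:ℝ) ^ (p - 1) * b T ^ p / p) * L T) := by rw [h4]; ring
end

section
/- Let p ≥ 1 and 0 < γ < 1, let a, b : [0,∞) → ℝ be nonnegative nondecreasing continuous functions, and let l be a nonnegative function continuous on (0,∞) and locally integrable on [0,∞). If u is a continuous nonnegative function on [0,∞) satisfying u(t) ≤ a(t) + b(t)(∫₀ᵗ l(s) u(s)^{pγ} ds)^{1/p} for all t ∈ [0,∞), then u(t) ≤ 2^{1-1/p} (a(t)^{p(1-γ)} + (1-γ) 2^{(p-1)γ} b(t)^p ∫₀ᵗ l(s) ds)^{1/(p(1-γ))} for all t ∈ [0,∞). -/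
open MeasureTheory Set Filter

private lemma aux_two_pow {x y q : ℝ} (hx : 0 ≤ x) (hy : 0 ≤ y) (hq : 1 ≤ q) :
    (x + y) ^ q ≤ 2 ^ (q - 1) * (x ^ q + y ^ q) := by
  lift x to NNReal using hx
  lift y to NNReal using hy
  have h := NNReal.rpow_add_le_mul_rpow_add_rpow x y hq
  have h2 := NNReal.coe_le_coe.2 h
  push_cast at h2
  exact_mod_cast h2

private lemma aux_sub_add {x y r : ℝ} (hx : 0 ≤ x) (hy : 0 ≤ y) (h0 : 0 ≤ r) (h1 : r ≤ 1) :
    (x + y) ^ r ≤ x ^ r + y ^ r := by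
  lift x to NNReal using hx
  lift y to NNReal using hy
  have h := NNReal.rpow_add_le_add_rpow x y h0 h1
  have h2 := NNReal.coe_le_coe.2 h
  push_cast at h2
  exact_mod_cast h2

private lemma ae_ne_zero : ∀ᵐ (x : ℝ) ∂volume, x ≠ 0 := by
  refine ae_iff.2 ?_
  have : {x : ℝ | ¬ x ≠ 0} = {0} := by ext x; simp
  rw [this]
  simp

/-- Corollary 2.2, case 0 < γ < 1:
`u(t) ≤ a(t) + b(t)(∫₀ᵗ l(s) u(s)^{pγ} ds)^{1/p}` implies
`u(t) ≤ 2^{1-1/p} (a(t)^{p(1-γ)} + (1-γ) 2^{(p-1)γ} b(t)^p ∫₀ᵗ l(s) ds)^{1/(p(1-γ))}`. -/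
theorem stmt2 (p γ : ℝ) (hp : 1 ≤ p) (hγ : γ ∈ Ioo (0:ℝ) 1)
    (a b l u : ℝ → ℝ)
    (ha_cont : ContinuousOn a (Ici 0)) (ha_mono : MonotoneOn a (Ici 0))
    (ha_nonneg : ∀ t ∈ Ici (0:ℝ), 0 ≤ a t)
    (hb_cont : ContinuousOn b (Ici 0)) (hb_mono : MonotoneOn b (Ici 0))
    (hb_nonneg : ∀ t ∈ Ici (0:ℝ), 0 ≤ b t)
    (hl_cont : ContinuousOn l (Ioi 0)) (hl_nonneg : ∀ t ∈ Ioi (0:ℝ), 0 ≤ l t)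
    (hl_int : ∀ t : ℝ, 0 ≤ t → IntervalIntegrable l volume 0 t)
    (hu_cont : ContinuousOn u (Ici 0)) (hu_nonneg : ∀ t ∈ Ici (0:ℝ), 0 ≤ u t)
    (hu : ∀ t ∈ Ici (0:ℝ),
      u t ≤ a t + b t * (∫ s in (0:ℝ)..t, l s * u s ^ (p * γ)) ^ (1/p)) :
    ∀ t ∈ Ici (0:ℝ),
      u t ≤ (2:ℝ) ^ (1 - 1/p) *
        (a t ^ (p * (1 - γ)) +
          (1 - γ) * (2:ℝ) ^ ((p - 1) * γ) * b t ^ p * ∫ s in (0:ℝ)..t, l s)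
        ^ (1 / (p * (1 - γ))) := by
  obtain ⟨hγ0, hγ1⟩ := hγ
  have hp0 : (0:ℝ) < p := lt_of_lt_of_le one_pos hp
  have h1γ : (0:ℝ) < 1 - γ := by linarith
  intro T hT
  simp only [mem_Ici] at hT
  have huT : 0 ≤ u T := hu_nonneg T hT
  have haT : 0 ≤ a T := ha_nonneg T hT
  have hbT : 0 ≤ b T := hb_nonneg T hT
  set g : ℝ → ℝ := fun s => l s * u s ^ (p * γ) with hg_def
  have hupc : ContinuousOn (fun s => u s ^ (p * γ)) (Ici 0) :=
    hu_cont.rpow_const (fun x _ => Or.inr (by positivity))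
  have hg_cont : ContinuousOn g (Ioi 0) :=
    hl_cont.mul (hupc.mono (Ioi_subset_Ici le_rfl))
  have hg_int : ∀ t : ℝ, 0 ≤ t → IntervalIntegrable g volume 0 t := fun t ht =>
    (hl_int t ht).mul_continuousOn (by
      rw [uIcc_of_le ht]; exact hupc.mono Icc_subset_Ici_self)
  set I : ℝ → ℝ := fun t => ∫ s in (0:ℝ)..t, g s with hI_def
  have hI_nonneg : ∀ t : ℝ, 0 ≤ t → 0 ≤ I t := by
    intro t ht
    apply intervalIntegral.integral_nonneg_of_ae_restrict ht
    filter_upwards [ae_restrict_mem measurableSet_Icc, ae_restrict_of_ae ae_ne_zero]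
      with s hs hs0
    have hs' : s ∈ Ioi (0:ℝ) := lt_of_le_of_ne hs.1 (Ne.symm hs0)
    exact mul_nonneg (hl_nonneg s hs') (Real.rpow_nonneg (hu_nonneg s (mem_Ici.2 (mem_Ioi.1 hs').le)) _)
  have hLT_nonneg : 0 ≤ ∫ s in (0:ℝ)..T, l s := by
    apply intervalIntegral.integral_nonneg_of_ae_restrict hT
    filter_upwards [ae_restrict_mem measurableSet_Icc, ae_restrict_of_ae ae_ne_zero]
      with s hs hs0
    exact hl_nonneg s (lt_of_le_of_ne hs.1 (Ne.symm hs0))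
  set q : ℝ := p * (1 - γ) with hq_def
  have hq0 : 0 < q := mul_pos hp0 h1γ
  set D : ℝ := a T ^ q + (1 - γ) * (2:ℝ) ^ ((p - 1) * γ) * b T ^ p *
      ∫ s in (0:ℝ)..T, l s with hD_def
  have hD_nonneg : 0 ≤ D := by
    have : (0:ℝ) ≤ a T ^ q := Real.rpow_nonneg haT _
    have h2 : (0:ℝ) ≤ (2:ℝ) ^ ((p - 1) * γ) := (Real.rpow_pos_of_pos two_pos _).le
    have h3 : (0:ℝ) ≤ b T ^ p := Real.rpow_nonneg hbT _
    have := mul_nonneg (mul_nonneg (mul_nonneg h1γ.le h2) h3) hLT_nonneg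
    rw [hD_def]; linarith
  -- The key estimate, with a perturbation ε.
  have key : ∀ ε : ℝ, 0 < ε →
      u T ^ q ≤ (2:ℝ) ^ ((p - 1) * (1 - γ)) * D + ε ^ (1 - γ) := by
    intro ε hε
    set A : ℝ := (2:ℝ) ^ (p - 1) * a T ^ p + ε with hA_def
    set B : ℝ := (2:ℝ) ^ (p - 1) * b T ^ p with hB_def
    have h2p : (0:ℝ) < (2:ℝ) ^ (p - 1) := Real.rpow_pos_of_pos two_pos _
    have hA0 : 0 < A := by
      have : (0:ℝ) ≤ (2:ℝ) ^ (p - 1) * a T ^ p :=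
        mul_nonneg h2p.le (Real.rpow_nonneg haT _)
      rw [hA_def]; linarith
    have hB0 : 0 ≤ B := mul_nonneg h2p.le (Real.rpow_nonneg hbT _)
    set z : ℝ → ℝ := fun t => A + B * I t with hz_def
    have hz_pos : ∀ t : ℝ, 0 ≤ t → 0 < z t := fun t ht =>
      lt_of_lt_of_le hA0 (le_add_of_nonneg_right (mul_nonneg hB0 (hI_nonneg t ht)))
    have hvz : ∀ s ∈ Icc (0:ℝ) T, u s ^ p ≤ z s := by
      intro s hs
      have hs0 : (0:ℝ) ≤ s := hs.1
      have hus : 0 ≤ u s := hu_nonneg s hs0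
      have has : 0 ≤ a s := ha_nonneg s hs0
      have hbs : 0 ≤ b s := hb_nonneg s hs0
      have hIs : 0 ≤ I s := hI_nonneg s hs0
      have hIp : 0 ≤ I s ^ (1/p) := Real.rpow_nonneg hIs _
      have h1 : u s ≤ a s + b s * I s ^ (1/p) := hu s hs0
      have h2 : u s ^ p ≤ (a s + b s * I s ^ (1/p)) ^ p :=
        Real.rpow_le_rpow hus h1 hp0.le
      have h3 : (a s + b s * I s ^ (1/p)) ^ p
          ≤ (2:ℝ) ^ (p - 1) * (a s ^ p + (b s * I s ^ (1/p)) ^ p) :=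
        aux_two_pow has (mul_nonneg hbs hIp) hp
      have h4 : (b s * I s ^ (1/p)) ^ p = b s ^ p * I s := by
        rw [Real.mul_rpow hbs hIp, ← Real.rpow_mul hIs, one_div_mul_cancel hp0.ne',
          Real.rpow_one]
      have hap : a s ^ p ≤ a T ^ p :=
        Real.rpow_le_rpow has (ha_mono hs0 hT hs.2) hp0.le
      have hbp : b s ^ p ≤ b T ^ p :=
        Real.rpow_le_rpow hbs (hb_mono hs0 hT hs.2) hp0.le
      have hbpI : b s ^ p * I s ≤ b T ^ p * I s :=
        mul_le_mul_of_nonneg_right hbp hIs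
      have : u s ^ p ≤ (2:ℝ) ^ (p - 1) * (a s ^ p + b s ^ p * I s) := by
        rw [← h4]; exact h2.trans h3
      calc u s ^ p ≤ (2:ℝ) ^ (p - 1) * (a s ^ p + b s ^ p * I s) := this
        _ ≤ (2:ℝ) ^ (p - 1) * (a T ^ p + b T ^ p * I s) := by
            apply mul_le_mul_of_nonneg_left _ h2p.le
            linarith
        _ = (2:ℝ) ^ (p - 1) * a T ^ p + B * I s := by rw [hB_def]; ring
        _ ≤ z s := by rw [hz_def, hA_def]; simp only; linarith
    set F : ℝ → ℝ := fun t => z t ^ (1 - γ) - (1 - γ) * B * ∫ s in (0:ℝ)..t, l s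
      with hF_def
    have hI_contOn : ContinuousOn I (Icc 0 T) := by
      have h := intervalIntegral.continuousOn_primitive_interval'
        (hg_int T hT) left_mem_uIcc
      rwa [uIcc_of_le hT] at h
    have hL_contOn : ContinuousOn (fun t => ∫ s in (0:ℝ)..t, l s) (Icc 0 T) := by
      have h := intervalIntegral.continuousOn_primitive_interval'
        (hl_int T hT) left_mem_uIcc
      rwa [uIcc_of_le hT] at h
    have hz_cont : ContinuousOn z (Icc 0 T) :=
      continuousOn_const.add (continuousOn_const.mul hI_contOn)
    have hF_cont : ContinuousOn F (Icc 0 T) :=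
      (hz_cont.rpow_const (fun x _ => Or.inr h1γ.le)).sub
        (continuousOn_const.mul hL_contOn)
    have hF_deriv : ∀ x ∈ Ioo (0:ℝ) T,
        HasDerivAt F ((B * g x) * (1 - γ) * z x ^ (1 - γ - 1) - (1 - γ) * B * l x) x := by
      intro x hx
      have hx0 : 0 < x := hx.1
      have hI' : HasDerivAt I (g x) x :=
        intervalIntegral.integral_hasDerivAt_right (hg_int x hx0.le)
          (hg_cont.stronglyMeasurableAtFilter isOpen_Ioi x hx0)
          (hg_cont.continuousAt (Ioi_mem_nhds hx0))
      have hz' : HasDerivAt z (B * g x) x := (hI'.const_mul B).const_add A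
      have hzp : HasDerivAt (fun t => z t ^ (1 - γ))
          ((B * g x) * (1 - γ) * z x ^ (1 - γ - 1)) x :=
        hz'.rpow_const (Or.inl (hz_pos x hx0.le).ne')
      have hL' : HasDerivAt (fun t => ∫ s in (0:ℝ)..t, l s) (l x) x :=
        intervalIntegral.integral_hasDerivAt_right (hl_int x hx0.le)
          (hl_cont.stronglyMeasurableAtFilter isOpen_Ioi x hx0)
          (hl_cont.continuousAt (Ioi_mem_nhds hx0))
      exact hzp.sub (hL'.const_mul ((1 - γ) * B))
    have hF_deriv_nonpos : ∀ x ∈ Ioo (0:ℝ) T,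
        (B * g x) * (1 - γ) * z x ^ (1 - γ - 1) - (1 - γ) * B * l x ≤ 0 := by
      intro x hx
      have hx0 : 0 < x := hx.1
      have hzx : 0 < z x := hz_pos x hx0.le
      have hux : 0 ≤ u x := hu_nonneg x hx0.le
      have hlx : 0 ≤ l x := hl_nonneg x hx0
      have h1 : u x ^ (p * γ) ≤ z x ^ γ := by
        rw [Real.rpow_mul hux]
        exact Real.rpow_le_rpow (Real.rpow_nonneg hux p)
          (hvz x ⟨hx0.le, hx.2.le⟩) hγ0.le
      have h2 : g x ≤ l x * z x ^ γ := mul_le_mul_of_nonneg_left h1 hlx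
      have h3 : z x ^ γ * z x ^ (1 - γ - 1) = 1 := by
        rw [← Real.rpow_add hzx]; norm_num
      have hzneg : 0 ≤ z x ^ (1 - γ - 1) := (Real.rpow_pos_of_pos hzx _).le
      have key2 : (B * g x) * (1 - γ) * z x ^ (1 - γ - 1) ≤ (1 - γ) * B * l x := by
        calc (B * g x) * (1 - γ) * z x ^ (1 - γ - 1)
            ≤ (B * (l x * z x ^ γ)) * (1 - γ) * z x ^ (1 - γ - 1) := by
              apply mul_le_mul_of_nonneg_right _ hzneg
              exact mul_le_mul_of_nonneg_right
                (mul_le_mul_of_nonneg_left h2 hB0) h1γ.le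
          _ = (1 - γ) * B * l x * (z x ^ γ * z x ^ (1 - γ - 1)) := by ring
          _ = (1 - γ) * B * l x := by rw [h3, mul_one]
      linarith
    have hF_anti : AntitoneOn F (Icc 0 T) := by
      apply antitoneOn_of_deriv_nonpos (convex_Icc 0 T) hF_cont
      · intro x hx
        rw [interior_Icc] at hx
        exact (hF_deriv x hx).differentiableAt.differentiableWithinAt
      · intro x hx
        rw [interior_Icc] at hx
        rw [(hF_deriv x hx).deriv]
        exact hF_deriv_nonpos x hx
    have hFT : F T ≤ F 0 := hF_anti ⟨le_refl 0, hT⟩ ⟨hT, le_refl T⟩ hT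
    have hF0 : F 0 = A ^ (1 - γ) := by
      simp [hF_def, hz_def, hI_def, intervalIntegral.integral_same]
    have hmain : z T ^ (1 - γ) ≤ A ^ (1 - γ) + (1 - γ) * B * ∫ s in (0:ℝ)..T, l s := by
      have := hFT
      rw [hF0] at this
      simp only [hF_def] at this
      linarith
    have h5 : u T ^ q ≤ z T ^ (1 - γ) := by
      rw [hq_def, Real.rpow_mul huT]
      exact Real.rpow_le_rpow (Real.rpow_nonneg huT p) (hvz T ⟨hT, le_refl T⟩) h1γ.le
    have h6 : A ^ (1 - γ) ≤ ((2:ℝ) ^ (p - 1) * a T ^ p) ^ (1 - γ) + ε ^ (1 - γ) :=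
      aux_sub_add (mul_nonneg h2p.le (Real.rpow_nonneg haT _)) hε.le h1γ.le
        (by linarith)
    have h7 : ((2:ℝ) ^ (p - 1) * a T ^ p) ^ (1 - γ)
        = (2:ℝ) ^ ((p - 1) * (1 - γ)) * a T ^ q := by
      rw [Real.mul_rpow h2p.le (Real.rpow_nonneg haT _), ← Real.rpow_mul (by norm_num),
        ← Real.rpow_mul haT, hq_def]
    have h8 : (1 - γ) * B * ∫ s in (0:ℝ)..T, l s
        = (2:ℝ) ^ ((p - 1) * (1 - γ)) *
          ((1 - γ) * (2:ℝ) ^ ((p - 1) * γ) * b T ^ p * ∫ s in (0:ℝ)..T, l s) := by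
      have hc : (2:ℝ) ^ (p - 1) = (2:ℝ) ^ ((p - 1) * (1 - γ)) * (2:ℝ) ^ ((p - 1) * γ) := by
        rw [← Real.rpow_add two_pos]
        congr 1
        ring
      rw [hB_def, hc]; ring
    calc u T ^ q ≤ z T ^ (1 - γ) := h5
      _ ≤ A ^ (1 - γ) + (1 - γ) * B * ∫ s in (0:ℝ)..T, l s := hmain
      _ ≤ (2:ℝ) ^ ((p - 1) * (1 - γ)) * a T ^ q + ε ^ (1 - γ)
          + (1 - γ) * B * ∫ s in (0:ℝ)..T, l s := by
            rw [← h7]; linarith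
      _ = (2:ℝ) ^ ((p - 1) * (1 - γ)) * D + ε ^ (1 - γ) := by
            rw [h8, hD_def]; ring
  -- pass to the limit ε → 0
  have hq_le : u T ^ q ≤ (2:ℝ) ^ ((p - 1) * (1 - γ)) * D := by
    apply le_of_forall_pos_le_add
    intro δ hδ
    have hε : (0:ℝ) < δ ^ (1 / (1 - γ)) := Real.rpow_pos_of_pos hδ _
    have h := key _ hε
    rwa [← Real.rpow_mul hδ.le, one_div_mul_cancel h1γ.ne', Real.rpow_one] at h
  -- extract the bound on u T
  have hCD : (0:ℝ) ≤ (2:ℝ) ^ ((p - 1) * (1 - γ)) * D :=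
    mul_nonneg (Real.rpow_pos_of_pos two_pos _).le hD_nonneg
  have huTq : u T = (u T ^ q) ^ (1 / q) := by
    rw [← Real.rpow_mul huT, mul_one_div_cancel hq0.ne', Real.rpow_one]
  have hfinal : u T ≤ ((2:ℝ) ^ ((p - 1) * (1 - γ)) * D) ^ (1 / q) := by
    rw [huTq]
    exact Real.rpow_le_rpow (Real.rpow_nonneg huT _) hq_le (by positivity)
  have hsplit : ((2:ℝ) ^ ((p - 1) * (1 - γ)) * D) ^ (1 / q)
      = (2:ℝ) ^ (1 - 1/p) * D ^ (1 / q) := by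
    rw [Real.mul_rpow (Real.rpow_pos_of_pos two_pos _).le hD_nonneg,
      ← Real.rpow_mul (by norm_num : (0:ℝ) ≤ 2)]
    congr 2
    rw [hq_def]
    field_simp
  rw [hsplit] at hfinal
  exact hfinal
end

section
/- Let a ≥ 0, β ∈ (0,1), p > 1/β, q = p/(p-1). Let b : [0,∞) → ℝ be a nonnegative nondecreasing continuous function, and let l be a nonnegative function with l(t) continuous on (0,∞) and l ∈ Lᵖ_loc[0,∞). If u is a function on (0,∞) with t^{1-β} u(t) continuous and nonnegative on [0,∞) and u(t) ≤ a t^{β-1} + b(t) ∫₀ᵗ (t-s)^{β-1} l(s) u(s) ds for all t ∈ (0,∞), then u(t) ≤ 2^{1-1/p} a t^{β-1} exp((2^{p-1} c(t)^p / p) ∫₀ᵗ l(s)^p ds) for all t ∈ (0,∞), where c(t) = 2^{1/q} b(t) t^{β-1+1/q} / (qβ-q+1)^{1/q}. -/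
open MeasureTheory Set Filter intervalIntegral

namespace Stmt6Aux



lemma gamma_sq_le (x : ℝ) (hx0 : 0 < x) :
    Real.Gamma (1 + x) ^ 2 ≤ Real.Gamma (1 + 2 * x) := by
  have h1 : (1:ℝ) ∈ Ioi (0:ℝ) := by norm_num
  have h2 : (1 + 2*x) ∈ Ioi (0:ℝ) := by simp [Ioi]; linarith
  have hcv := Real.convexOn_log_Gamma.2 h1 h2 (by norm_num : (0:ℝ) ≤ 1/2)
    (by norm_num : (0:ℝ) ≤ 1/2) (by norm_num)
  simp only [smul_eq_mul, Function.comp_apply, Real.Gamma_one, Real.log_one] at hcv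
  rw [show (1/2 : ℝ) * (1:ℝ) + (1/2 : ℝ) * (1 + 2*x) = 1 + x by ring] at hcv
  have hpos1 : 0 < Real.Gamma (1 + x) := Real.Gamma_pos_of_pos (by linarith)
  have hpos2 : 0 < Real.Gamma (1 + 2*x) := Real.Gamma_pos_of_pos (by linarith)
  have : Real.log (Real.Gamma (1 + x) ^ 2) ≤ Real.log (Real.Gamma (1 + 2*x)) := by
    rw [Real.log_pow]
    push_cast
    nlinarith [hcv]
  exact (Real.log_le_log_iff (by positivity) hpos2).mp this

lemma beta_integrable (x : ℝ) (hx0 : 0 < x) :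
    IntervalIntegrable (fun σ : ℝ => σ ^ (x - 1) * (1 - σ) ^ (x - 1)) volume 0 1 := by
  have hC := Complex.betaIntegral_convergent (u := (x:ℂ)) (v := (x:ℂ))
    (by simpa using hx0) (by simpa using hx0)
  rw [intervalIntegrable_iff_integrableOn_Ioc_of_le (by norm_num)] at hC ⊢
  have heq : EqOn (fun σ : ℝ => ((σ:ℂ) ^ ((x:ℂ) - 1) * (1 - (σ:ℂ)) ^ ((x:ℂ) - 1)).re)
      (fun σ : ℝ => σ ^ (x - 1) * (1 - σ) ^ (x - 1)) (Ioc 0 1) := by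
    intro σ hσ
    have h1 : ((σ:ℂ)) ^ ((x:ℂ) - 1) = ((σ ^ (x-1) : ℝ) : ℂ) := by
      rw [Complex.ofReal_cpow hσ.1.le]; push_cast; ring_nf
    have h2 : ((1 - (σ:ℂ))) ^ ((x:ℂ) - 1) = (((1 - σ) ^ (x-1) : ℝ) : ℂ) := by
      rw [show (1 - (σ:ℂ)) = (((1:ℝ) - σ : ℝ) : ℂ) by push_cast; ring,
        Complex.ofReal_cpow (by linarith [hσ.2])]
      push_cast; ring_nf
    simp [h1, h2, ← Complex.ofReal_mul]
  exact MeasureTheory.IntegrableOn.congr_fun hC.re heq measurableSet_Ioc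

lemma beta_value (x : ℝ) (hx0 : 0 < x) :
    Real.Gamma x * Real.Gamma x =
      Real.Gamma (2 * x) * ∫ σ in (0:ℝ)..1, σ ^ (x - 1) * (1 - σ) ^ (x - 1) := by
  have hB := Complex.Gamma_mul_Gamma_eq_betaIntegral (s := (x:ℂ)) (t := (x:ℂ))
    (by simpa using hx0) (by simpa using hx0)
  have hbeta : Complex.betaIntegral (x:ℂ) (x:ℂ) =
      ((∫ σ in (0:ℝ)..1, σ ^ (x - 1) * (1 - σ) ^ (x - 1) : ℝ) : ℂ) := by
    rw [Complex.betaIntegral, ← intervalIntegral.integral_ofReal]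
    apply intervalIntegral.integral_congr
    intro σ hσ
    rw [uIcc_of_le (by norm_num : (0:ℝ) ≤ 1)] at hσ
    have h1 : ((σ:ℂ)) ^ ((x:ℂ) - 1) = ((σ ^ (x-1) : ℝ) : ℂ) := by
      rw [Complex.ofReal_cpow hσ.1]; push_cast; ring_nf
    have h2 : ((1 - (σ:ℂ))) ^ ((x:ℂ) - 1) = (((1 - σ) ^ (x-1) : ℝ) : ℂ) := by
      rw [show (1 - (σ:ℂ)) = (((1:ℝ) - σ : ℝ) : ℂ) by push_cast; ring,
        Complex.ofReal_cpow (by linarith [hσ.2])]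
      push_cast; ring_nf
    simp [h1, h2, ← Complex.ofReal_mul]
  rw [hbeta] at hB
  have hB' : ((Real.Gamma x * Real.Gamma x : ℝ) : ℂ) =
      ((Real.Gamma (2*x) * ∫ σ in (0:ℝ)..1, σ ^ (x - 1) * (1 - σ) ^ (x - 1) : ℝ) : ℂ) := by
    push_cast
    rw [← Complex.Gamma_ofReal, ← Complex.Gamma_ofReal]
    rw [show ((2*x : ℝ) : ℂ) = (x:ℂ) + (x:ℂ) by push_cast; ring]
    exact hB
  exact_mod_cast hB'

lemma beta_le (x : ℝ) (hx0 : 0 < x) :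
    (∫ σ in (0:ℝ)..1, σ ^ (x - 1) * (1 - σ) ^ (x - 1)) ≤ 2 / x := by
  have hval := beta_value x hx0
  have hg2 : 0 < Real.Gamma (2*x) := Real.Gamma_pos_of_pos (by linarith)
  have hgam := gamma_sq_le x hx0
  have e1 : Real.Gamma (1 + x) = x * Real.Gamma x := by
    rw [add_comm]; exact Real.Gamma_add_one hx0.ne'
  have e2 : Real.Gamma (1 + 2*x) = (2*x) * Real.Gamma (2*x) := by
    rw [add_comm]; exact Real.Gamma_add_one (by positivity)
  rw [e1, e2] at hgam
  -- (x Γx)^2 ≤ 2x Γ(2x), ΓxΓx = Γ(2x) J  ⟹ J ≤ 2/x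
  rw [le_div_iff₀ hx0]
  set J := ∫ σ in (0:ℝ)..1, σ ^ (x - 1) * (1 - σ) ^ (x - 1)
  have h1 : (J * x) * (x * Real.Gamma (2*x)) ≤ 2 * (x * Real.Gamma (2*x)) := by
    have h0 : x^2*(Real.Gamma x*Real.Gamma x) = x^2*(Real.Gamma (2*x)*J) := by rw [hval]
    nlinarith [hgam, h0]
  exact le_of_mul_le_mul_right h1 (mul_pos hx0 hg2)




lemma kernel_eq (α t : ℝ) (ht : 0 < t) :
    ∫ s in (0:ℝ)..t, (t - s) ^ α * s ^ α
      = t ^ (2*α+1) * ∫ σ in (0:ℝ)..1, σ ^ α * (1 - σ) ^ α := by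
  have hsub := intervalIntegral.smul_integral_comp_mul_left
    (a := (0:ℝ)) (b := 1) (fun s => (t - s) ^ α * s ^ α) t
  rw [mul_zero, mul_one] at hsub
  rw [← hsub]
  have key : EqOn (fun σ : ℝ => (t - t * σ) ^ α * (t * σ) ^ α)
      (fun σ : ℝ => t ^ α * t ^ α * (σ ^ α * (1 - σ) ^ α)) (uIcc (0:ℝ) 1) := by
    intro σ hσ
    rw [uIcc_of_le (by norm_num : (0:ℝ) ≤ 1)] at hσ
    have h1 : t - t * σ = t * (1 - σ) := by ring
    simp only [h1]
    rw [Real.mul_rpow ht.le (by linarith [hσ.2]), Real.mul_rpow ht.le hσ.1]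
    ring
  rw [intervalIntegral.integral_congr key, intervalIntegral.integral_const_mul,
    smul_eq_mul, show 2*α+1 = α + (α + 1) by ring, Real.rpow_add ht, Real.rpow_add ht,
    Real.rpow_one]
  ring

lemma kernel_integrable (α t : ℝ) (hα : -1 < α) (ht : 0 < t) :
    IntervalIntegrable (fun s : ℝ => (t - s) ^ α * s ^ α) volume 0 t := by
  have hg : IntervalIntegrable (fun σ : ℝ => σ ^ α * (1 - σ) ^ α) volume 0 1 := by
    have := beta_integrable (α + 1) (by linarith)
    simpa using this
  have h2 := hg.comp_mul_right (c := t⁻¹)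
  rw [show (0:ℝ) / t⁻¹ = 0 by simp, show (1:ℝ) / t⁻¹ = t by field_simp] at h2
  have h3 := h2.const_mul (t ^ α * t ^ α)
  rw [intervalIntegrable_iff_integrableOn_Ioc_of_le ht.le] at h3 ⊢
  have heq : EqOn (fun s : ℝ => t ^ α * t ^ α * ((s * t⁻¹) ^ α * (1 - s * t⁻¹) ^ α))
      (fun s : ℝ => (t - s) ^ α * s ^ α) (Ioc 0 t) := by
    intro s hs
    have h2' : s * t⁻¹ = s / t := by rw [div_eq_mul_inv]
    simp only
    rw [h2', show (1:ℝ) - s / t = (t - s) / t from by field_simp,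
      Real.div_rpow hs.1.le ht.le,
      Real.div_rpow (by linarith [hs.2] : (0:ℝ) ≤ t - s) ht.le]
    have htα : t ^ α ≠ 0 := (Real.rpow_pos_of_pos ht α).ne'
    field_simp
  exact MeasureTheory.IntegrableOn.congr_fun h3 heq measurableSet_Ioc

lemma memLp_ofReal {r : ℝ} (hr : 1 ≤ r) {f : ℝ → ℝ} {μ : Measure ℝ}
    (hmeas : AEStronglyMeasurable f μ) (hint : Integrable (fun x => |f x| ^ r) μ) :
    MemLp f (ENNReal.ofReal r) μ := by
  have h0 : (ENNReal.ofReal r) ≠ 0 := by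
    simp only [ne_eq, ENNReal.ofReal_eq_zero, not_le]; linarith
  have htop : (ENNReal.ofReal r) ≠ ⊤ := ENNReal.ofReal_ne_top
  have hiff := memLp_norm_rpow_iff (q := ENNReal.ofReal r) (p := ENNReal.ofReal r) hmeas h0 htop
  rw [ENNReal.div_self h0 htop] at hiff
  apply hiff.mp
  rw [memLp_one_iff_integrable]
  have : (fun x => ‖f x‖ ^ (ENNReal.ofReal r).toReal) = fun x => |f x| ^ r := by
    funext x
    rw [ENNReal.toReal_ofReal (by linarith), Real.norm_eq_abs]
  rw [this]
  exact hint


lemma gronwall {T A : ℝ} (hT : 0 < T) (hA : 0 ≤ A) {K w : ℝ → ℝ}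
    (hK_cont : ContinuousOn K (Ioi 0)) (hK_nonneg : ∀ s ∈ Ioi (0:ℝ), 0 ≤ K s)
    (hK_int : IntervalIntegrable K volume 0 T)
    (hw_cont : ContinuousOn w (Icc 0 T))
    (hw : ∀ t ∈ Ioc (0:ℝ) T, w t ≤ A + ∫ s in (0:ℝ)..t, K s * w s) :
    ∀ t ∈ Ioc (0:ℝ) T, w t ≤ A * Real.exp (∫ s in (0:ℝ)..t, K s) := by
  have hIcc : uIcc (0:ℝ) T = Icc 0 T := uIcc_of_le hT.le
  have hKw_int : IntervalIntegrable (fun s => K s * w s) volume 0 T := by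
    apply hK_int.mul_continuousOn
    rwa [hIcc]
  set G : ℝ → ℝ := fun r => ∫ s in (0:ℝ)..r, K s with hG
  set W : ℝ → ℝ := fun r => ∫ s in (0:ℝ)..r, K s * w s with hW
  set h : ℝ → ℝ := fun r => (A + W r) * Real.exp (-G r) with hh
  have hG_cont : ContinuousOn G (Icc 0 T) := by
    have := intervalIntegral.continuousOn_primitive_interval
      (a := (0:ℝ)) (b := T) (μ := volume) (f := K) ?_
    · rwa [hIcc] at this
    · rw [hIcc, integrableOn_Icc_iff_integrableOn_Ioc]
      exact (intervalIntegrable_iff_integrableOn_Ioc_of_le hT.le).mp hK_int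
  have hW_cont : ContinuousOn W (Icc 0 T) := by
    have := intervalIntegral.continuousOn_primitive_interval
      (a := (0:ℝ)) (b := T) (μ := volume) (f := fun s => K s * w s) ?_
    · rwa [hIcc] at this
    · rw [hIcc, integrableOn_Icc_iff_integrableOn_Ioc]
      exact (intervalIntegrable_iff_integrableOn_Ioc_of_le hT.le).mp hKw_int
  have hh_cont : ContinuousOn h (Icc 0 T) := by
    apply ContinuousOn.mul (continuousOn_const.add hW_cont)
    exact (hG_cont.neg).rexp
  have hKw_cont : ContinuousOn (fun s => K s * w s) (Ioo 0 T) := by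
    apply ContinuousOn.mul (hK_cont.mono Ioo_subset_Ioi_self)
    exact hw_cont.mono Ioo_subset_Icc_self
  have hderiv : ∀ t₀ ∈ Ioo (0:ℝ) T, HasDerivAt h
      ((K t₀ * w t₀) * Real.exp (-G t₀) + (A + W t₀) * (Real.exp (-G t₀) * -(K t₀))) t₀ := by
    intro t₀ ht₀
    have hmem : Icc 0 T ∈ nhds t₀ := Icc_mem_nhds ht₀.1 ht₀.2
    have hKt : ContinuousAt K t₀ :=
      hK_cont.continuousAt (Ioi_mem_nhds ht₀.1)
    have hKwt : ContinuousAt (fun s => K s * w s) t₀ :=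
      hKw_cont.continuousAt (Ioo_mem_nhds ht₀.1 ht₀.2)
    have hsm : StronglyMeasurableAtFilter K (nhds t₀) volume :=
      hK_cont.stronglyMeasurableAtFilter isOpen_Ioi _ ht₀.1
    have hsm2 : StronglyMeasurableAtFilter (fun s => K s * w s) (nhds t₀) volume :=
      hKw_cont.stronglyMeasurableAtFilter isOpen_Ioo _ ht₀
    have hKint' : IntervalIntegrable K volume 0 t₀ :=
      hK_int.mono_set (by rw [hIcc, uIcc_of_le ht₀.1.le]; exact Icc_subset_Icc le_rfl ht₀.2.le)
    have hKwint' : IntervalIntegrable (fun s => K s * w s) volume 0 t₀ :=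
      hKw_int.mono_set (by rw [hIcc, uIcc_of_le ht₀.1.le]; exact Icc_subset_Icc le_rfl ht₀.2.le)
    have hdG : HasDerivAt G (K t₀) t₀ :=
      intervalIntegral.integral_hasDerivAt_right hKint' hsm hKt
    have hdW : HasDerivAt W (K t₀ * w t₀) t₀ :=
      intervalIntegral.integral_hasDerivAt_right hKwint' hsm2 hKwt
    have := ((hasDerivAt_const t₀ A).add hdW).mul ((hdG.neg).exp)
    rw [zero_add] at this
    exact this
  have hanti : AntitoneOn h (Icc 0 T) := by
    apply antitoneOn_of_deriv_nonpos (convex_Icc 0 T) hh_cont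
    · intro t₀ ht₀
      rw [interior_Icc] at ht₀
      exact (hderiv t₀ ht₀).differentiableAt.differentiableWithinAt
    · intro t₀ ht₀
      rw [interior_Icc] at ht₀
      rw [(hderiv t₀ ht₀).deriv]
      have hwle := hw t₀ (Ioo_subset_Ioc_self ht₀)
      have hK0 := hK_nonneg t₀ ht₀.1
      have hexp : 0 < Real.exp (-G t₀) := Real.exp_pos _
      have : K t₀ * w t₀ * Real.exp (-G t₀) + (A + W t₀) * (Real.exp (-G t₀) * -K t₀)
          = Real.exp (-G t₀) * (K t₀ * (w t₀ - (A + W t₀))) := by ring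
      rw [this]
      apply mul_nonpos_of_nonneg_of_nonpos hexp.le
      apply mul_nonpos_of_nonneg_of_nonpos hK0
      simp only [sub_nonpos]
      exact hwle
  intro t ht
  have hht : h t ≤ h 0 := hanti (by constructor <;> [exact le_rfl; exact hT.le])
    ⟨ht.1.le, ht.2⟩ ht.1.le
  have hh0 : h 0 = A := by
    simp only [hh, hW, hG, intervalIntegral.integral_same, neg_zero, Real.exp_zero]
    ring
  rw [hh0] at hht
  have key : A + W t ≤ A * Real.exp (G t) := by
    have hexp : 0 < Real.exp (-G t) := Real.exp_pos _
    have := mul_le_mul_of_nonneg_right hht (le_of_lt (Real.exp_pos (G t)))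
    rwa [hh, mul_assoc, ← Real.exp_add, neg_add_cancel, Real.exp_zero, mul_one] at this
  calc w t ≤ A + W t := hw t ht
    _ ≤ A * Real.exp (G t) := key

lemma two_rpow_helper {p A B : ℝ} (hp : 1 ≤ p) (hA : 0 ≤ A) (hB : 0 ≤ B) :
    (A + B) ^ p ≤ 2 ^ (p - 1) * (A ^ p + B ^ p) := by
  have hconv := (convexOn_rpow hp).2 (mem_Ici.mpr hA) (mem_Ici.mpr hB)
    (by norm_num : (0:ℝ) ≤ 1/2) (by norm_num : (0:ℝ) ≤ 1/2) (by norm_num)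
  simp only [smul_eq_mul] at hconv
  have h2 : (A + B) ^ p = 2 ^ p * (1/2*A + 1/2*B) ^ p := by
    rw [← Real.mul_rpow (by norm_num) (by linarith)]
    rw [show (2:ℝ) * (1/2*A + 1/2*B) = A + B from by ring]
  calc (A+B)^p = 2^p * (1/2*A+1/2*B)^p := h2
    _ ≤ 2^p * (1/2*A^p + 1/2*B^p) :=
        mul_le_mul_of_nonneg_left hconv (Real.rpow_nonneg (by norm_num) _)
    _ = 2^(p-1) * (A^p + B^p) := by
        rw [Real.rpow_sub (by norm_num : (0:ℝ) < 2), Real.rpow_one]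
        ring

end Stmt6Aux

/-- Corollary 2.6, case γ = 1:
`u(t) ≤ a t^{β-1} + b(t) ∫₀ᵗ (t-s)^{β-1} l(s) u(s) ds` implies
`u(t) ≤ 2^{1-1/p} a t^{β-1} exp((2^{p-1} c(t)^p / p) ∫₀ᵗ l(s)^p ds)`,
where `c(t) = 2^{1/q} b(t) t^{β-1+1/q} / (qβ-q+1)^{1/q}`. -/
theorem stmt6 (a β p q : ℝ) (ha : 0 ≤ a)
    (hβ : β ∈ Ioo (0:ℝ) 1) (hp : 1/β < p) (hq : q = p / (p - 1))
    (b : ℝ → ℝ)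
    (hb_cont : ContinuousOn b (Ici 0)) (hb_mono : MonotoneOn b (Ici 0))
    (hb_nonneg : ∀ t ∈ Ici (0:ℝ), 0 ≤ b t)
    (l : ℝ → ℝ)
    (hl_nonneg : ∀ t ∈ Ioi (0:ℝ), 0 ≤ l t)
    (hl_cont : ContinuousOn l (Ioi 0))
    (hl_lp : ∀ t : ℝ, 0 ≤ t → IntervalIntegrable (fun s => l s ^ p) volume 0 t)
    (u : ℝ → ℝ)
    (hu_cont : ContinuousOn (fun t => t ^ (1 - β) * u t) (Ici 0))
    (hu_nonneg : ∀ t ∈ Ici (0:ℝ), 0 ≤ t ^ (1 - β) * u t)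
    (hu : ∀ t ∈ Ioi (0:ℝ),
      u t ≤ a * t ^ (β - 1) + b t * ∫ s in (0:ℝ)..t, (t - s) ^ (β - 1) * (l s * u s))
    (c : ℝ → ℝ)
    (hc : ∀ t, c t = (2:ℝ) ^ (1/q) * b t * t ^ (β - 1 + 1/q) / (q * β - q + 1) ^ (1/q)) :
    ∀ t ∈ Ioi (0:ℝ),
      u t ≤ (2:ℝ) ^ (1 - 1/p) * a * t ^ (β - 1) *
        Real.exp (((2:ℝ) ^ (p - 1) * c t ^ p / p) * ∫ s in (0:ℝ)..t, l s ^ p) := by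
  obtain ⟨hβ0, hβ1⟩ := hβ
  have hp1 : 1 < p := lt_trans (one_lt_one_div hβ0 hβ1) hp
  have hp0 : 0 < p := by linarith
  have hpq : p.HolderConjugate q := (Real.holderConjugate_iff_eq_conjExponent hp1).mpr hq
  have hq1 : 1 < q := hpq.symm.lt
  have hq0 : 0 < q := by linarith
  have hpβ : 1 < p * β := by
    rw [div_lt_iff₀ hβ0] at hp; linarith
  have hinv : 1/p + 1/q = 1 := by
    have := hpq.inv_add_inv_eq_one
    simpa [one_div] using this
  set x := q * β - q + 1 with hxdef
  have hx0 : 0 < x := by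
    have h1 : q * (1 - β) < 1 := by
      rw [hq, div_mul_eq_mul_div, div_lt_one (by linarith : (0:ℝ) < p - 1)]
      nlinarith
    simp only [hxdef]; nlinarith
  set α := (β - 1) * q with hαdef
  have hαx : α + 1 = x := by simp only [hαdef, hxdef]; ring
  have hα1 : -1 < α := by linarith
  have hβq : β - 1 + 1/q = β - 1/p := by linarith
  have honeq : 0 < 1/q := by positivity
  have hexp_nonneg : 0 ≤ β - 1 + 1/q := by
    have h1 : 1/p < β := by rw [div_lt_iff₀ hp0]; nlinarith
    linarith
  set v : ℝ → ℝ := fun s => s ^ (1 - β) * u s with hvdef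
  have hv_cont : ContinuousOn v (Ici 0) := hu_cont
  have hv_nonneg : ∀ s ∈ Ici (0:ℝ), 0 ≤ v s := hu_nonneg
  have huv : ∀ s : ℝ, 0 < s → u s = s ^ (β - 1) * v s := by
    intro s hs
    simp only [hvdef]
    rw [← mul_assoc, ← Real.rpow_add hs]
    norm_num
  intro T hT
  rw [mem_Ioi] at hT
  set w : ℝ → ℝ := fun s => v s ^ p with hwdef
  have hw_cont : ContinuousOn w (Icc 0 T) := by
    apply ContinuousOn.rpow_const (hv_cont.mono Icc_subset_Ici_self)
    intro s hs; exact Or.inr hp0.le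
  have hw_nonneg : ∀ s ∈ Ici (0:ℝ), 0 ≤ w s := fun s hs => Real.rpow_nonneg (hv_nonneg s hs) _
  have hcT_nonneg : ∀ t, 0 ≤ t → 0 ≤ c t := by
    intro t ht0
    rw [hc]
    apply div_nonneg _ (Real.rpow_nonneg hx0.le _)
    have := hb_nonneg t ht0
    positivity
  have hIp_nonneg : ∀ t, 0 < t → 0 ≤ ∫ s in (0:ℝ)..t, l s ^ p * w s := by
    intro t ht0
    rw [intervalIntegral.integral_of_le ht0.le]
    apply setIntegral_nonneg measurableSet_Ioc
    intro s hs
    exact mul_nonneg (Real.rpow_nonneg (hl_nonneg s hs.1) _)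
      (hw_nonneg s hs.1.le)
  -- main per-t estimate via Hölder
  have key : ∀ t ∈ Ioc (0:ℝ) T,
      v t ≤ a + c T * (∫ s in (0:ℝ)..t, l s ^ p * w s) ^ (1/p) := by
    intro t ht
    obtain ⟨ht0, htT⟩ := ht
    set μ := volume.restrict (Ioo (0:ℝ) t) with hμ
    set G : ℝ → ℝ := fun s => l s * v s with hGdef
    set F : ℝ → ℝ := fun s => (t - s) ^ (β - 1) * s ^ (β - 1) with hFdef
    have hI : (∫ s in (0:ℝ)..t, (t - s) ^ (β - 1) * (l s * u s))
        = ∫ s, G s * F s ∂μ := by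
      rw [intervalIntegral.integral_of_le ht0.le, integral_Ioc_eq_integral_Ioo]
      apply setIntegral_congr_fun measurableSet_Ioo
      intro s hs
      simp only [hGdef, hFdef]
      rw [huv s hs.1]
      ring
    have hIoo_Ioi : Ioo (0:ℝ) t ⊆ Ioi 0 := Ioo_subset_Ioi_self
    have hIoo_Ici : Ioo (0:ℝ) t ⊆ Ici 0 := fun s hs => le_of_lt hs.1
    have hG_cont : ContinuousOn G (Ioo 0 t) :=
      (hl_cont.mono hIoo_Ioi).mul (hv_cont.mono hIoo_Ici)
    have hF_cont : ContinuousOn F (Ioo 0 t) := by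
      apply ContinuousOn.mul
      · apply ContinuousOn.rpow_const ((continuous_const.sub continuous_id).continuousOn)
        intro s hs
        exact Or.inl (sub_ne_zero.mpr hs.2.ne')
      · apply ContinuousOn.rpow_const continuous_id.continuousOn
        intro s hs; exact Or.inl hs.1.ne'
    have hG_nonneg : ∀ s ∈ Ioo (0:ℝ) t, 0 ≤ G s := fun s hs =>
      mul_nonneg (hl_nonneg s hs.1) (hv_nonneg s hs.1.le)
    have hF_nonneg : ∀ s ∈ Ioo (0:ℝ) t, 0 ≤ F s := fun s hs =>
      mul_nonneg (Real.rpow_nonneg (by linarith [hs.2]) _) (Real.rpow_nonneg hs.1.le _)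
    have hlv_int : IntervalIntegrable (fun s => l s ^ p * w s) volume 0 t := by
      apply (hl_lp t ht0.le).mul_continuousOn
      exact hw_cont.mono (by rw [uIcc_of_le ht0.le]; exact Icc_subset_Icc le_rfl htT)
    have hG_mem : MemLp G (ENNReal.ofReal p) μ := by
      apply Stmt6Aux.memLp_ofReal hp1.le (hG_cont.aestronglyMeasurable measurableSet_Ioo)
      have hbase : IntegrableOn (fun s => l s ^ p * w s) (Ioo 0 t) volume :=
        ((intervalIntegrable_iff_integrableOn_Ioc_of_le ht0.le).mp hlv_int).mono_set
          Ioo_subset_Ioc_self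
      apply MeasureTheory.IntegrableOn.congr_fun hbase _ measurableSet_Ioo
      intro s hs
      simp only [hwdef, hGdef]
      rw [abs_of_nonneg (hG_nonneg s hs),
        Real.mul_rpow (hl_nonneg s hs.1) (hv_nonneg s hs.1.le)]
    have hF_mem : MemLp F (ENNReal.ofReal q) μ := by
      apply Stmt6Aux.memLp_ofReal hq1.le (hF_cont.aestronglyMeasurable measurableSet_Ioo)
      have hbase : IntegrableOn (fun s => (t - s) ^ α * s ^ α) (Ioo 0 t) volume :=
        ((intervalIntegrable_iff_integrableOn_Ioc_of_le ht0.le).mp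
          (Stmt6Aux.kernel_integrable α t hα1 ht0)).mono_set Ioo_subset_Ioc_self
      apply MeasureTheory.IntegrableOn.congr_fun hbase _ measurableSet_Ioo
      intro s hs
      simp only [hFdef]
      rw [abs_of_nonneg (hF_nonneg s hs),
        Real.mul_rpow (Real.rpow_nonneg (by linarith [hs.2] : (0:ℝ) ≤ t - s) _)
          (Real.rpow_nonneg hs.1.le _),
        ← Real.rpow_mul (by linarith [hs.2] : (0:ℝ) ≤ t - s),
        ← Real.rpow_mul hs.1.le, hαdef]
    have hG0 : 0 ≤ᵐ[μ] G := (ae_restrict_iff' measurableSet_Ioo).mpr (ae_of_all _ hG_nonneg)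
    have hF0 : 0 ≤ᵐ[μ] F := (ae_restrict_iff' measurableSet_Ioo).mpr (ae_of_all _ hF_nonneg)
    have holder := MeasureTheory.integral_mul_le_Lp_mul_Lq_of_nonneg hpq hG0 hF0 hG_mem hF_mem
    have hGp : ∫ s, G s ^ p ∂μ = ∫ s in (0:ℝ)..t, l s ^ p * w s := by
      rw [intervalIntegral.integral_of_le ht0.le, integral_Ioc_eq_integral_Ioo]
      apply setIntegral_congr_fun measurableSet_Ioo
      intro s hs
      simp only [hGdef, hwdef]
      rw [Real.mul_rpow (hl_nonneg s hs.1) (hv_nonneg s hs.1.le)]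
    have hFq_bound : ∫ s, F s ^ q ∂μ ≤ t ^ (2*α+1) * (2/x) := by
      have heq : ∫ s, F s ^ q ∂μ = ∫ s in (0:ℝ)..t, (t - s) ^ α * s ^ α := by
        rw [intervalIntegral.integral_of_le ht0.le, integral_Ioc_eq_integral_Ioo]
        apply setIntegral_congr_fun measurableSet_Ioo
        intro s hs
        simp only [hFdef]
        rw [Real.mul_rpow (Real.rpow_nonneg (by linarith [hs.2] : (0:ℝ) ≤ t - s) _)
            (Real.rpow_nonneg hs.1.le _),
          ← Real.rpow_mul (by linarith [hs.2] : (0:ℝ) ≤ t - s),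
          ← Real.rpow_mul hs.1.le, hαdef]
      rw [heq, Stmt6Aux.kernel_eq α t ht0]
      have hint : (∫ σ in (0:ℝ)..1, σ ^ α * (1 - σ) ^ α) ≤ 2 / x := by
        have hax : α = x - 1 := by linarith
        rw [hax]
        exact Stmt6Aux.beta_le x hx0
      exact mul_le_mul_of_nonneg_left hint (Real.rpow_nonneg ht0.le _)
    have hμGp_nonneg : 0 ≤ ∫ s, G s ^ p ∂μ :=
      setIntegral_nonneg measurableSet_Ioo fun s hs => Real.rpow_nonneg (hG_nonneg s hs) _
    have hμFq_nonneg : 0 ≤ ∫ s, F s ^ q ∂μ :=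
      setIntegral_nonneg measurableSet_Ioo fun s hs => Real.rpow_nonneg (hF_nonneg s hs) _
    have hfq : (∫ s, F s ^ q ∂μ) ^ (1/q) ≤ (t ^ (2*α+1) * (2/x)) ^ (1/q) :=
      Real.rpow_le_rpow hμFq_nonneg hFq_bound (by positivity)
    have hut := hu t ht0
    have hIp0 : (0:ℝ) ≤ (∫ s in (0:ℝ)..t, l s ^ p * w s) ^ (1/p) :=
      Real.rpow_nonneg (hIp_nonneg t ht0) _
    have hprod : ∫ s, G s * F s ∂μ ≤
        (∫ s in (0:ℝ)..t, l s ^ p * w s) ^ (1/p) * (t ^ (2*α+1) * (2/x)) ^ (1/q) := by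
      calc ∫ s, G s * F s ∂μ
          ≤ (∫ s, G s ^ p ∂μ) ^ (1/p) * (∫ s, F s ^ q ∂μ) ^ (1/q) := holder
        _ ≤ (∫ s in (0:ℝ)..t, l s ^ p * w s) ^ (1/p) * (t ^ (2*α+1) * (2/x)) ^ (1/q) := by
            rw [hGp]
            exact mul_le_mul_of_nonneg_left hfq hIp0
    have hbt : 0 ≤ t ^ (1-β) * b t :=
      mul_nonneg (Real.rpow_nonneg ht0.le _) (hb_nonneg t ht0.le)
    have hvt : v t ≤ a + (t ^ (1-β) * b t) * ∫ s, G s * F s ∂μ := by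
      have h1 : t ^ (1-β) * (a * t ^ (β-1)) = a := by
        rw [show t ^ (1-β) * (a * t ^ (β-1)) = a * (t ^ (1-β) * t ^ (β-1)) from by ring,
          ← Real.rpow_add ht0]
        norm_num
      calc v t = t ^ (1-β) * u t := rfl
        _ ≤ t ^ (1-β) * (a * t ^ (β-1) +
              b t * ∫ s in (0:ℝ)..t, (t - s) ^ (β - 1) * (l s * u s)) :=
            mul_le_mul_of_nonneg_left hut (Real.rpow_nonneg ht0.le _)
        _ = a + (t ^ (1-β) * b t) * ∫ s in (0:ℝ)..t, (t - s) ^ (β - 1) * (l s * u s) := by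
            rw [mul_add, h1]; ring
        _ = a + (t ^ (1-β) * b t) * ∫ s, G s * F s ∂μ := by rw [hI]
    have hct_eq : (t ^ (1-β) * b t) * (t ^ (2*α+1) * (2/x)) ^ (1/q) = c t := by
      rw [Real.mul_rpow (Real.rpow_nonneg ht0.le _) (by positivity : (0:ℝ) ≤ 2/x),
        ← Real.rpow_mul ht0.le,
        Real.div_rpow (by norm_num : (0:ℝ) ≤ 2) hx0.le,
        hc t]
      have hexp : (1-β) + (2*α+1)*(1/q) = β - 1 + 1/q := by
        simp only [hαdef]; field_simp; ring
      rw [show t ^ (1-β) * b t * (t ^ ((2*α+1)*(1/q)) * (2 ^ (1/q) / x ^ (1/q)))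
          = (t ^ (1-β) * t ^ ((2*α+1)*(1/q))) * b t * (2 ^ (1/q) / x ^ (1/q)) from by ring,
        ← Real.rpow_add ht0, hexp]
      ring
    have hct_le : c t ≤ c T := by
      rw [hc t, hc T]
      have hbtT : b t ≤ b T := hb_mono (mem_Ici.mpr ht0.le) (mem_Ici.mpr (ht0.le.trans htT)) htT
      have hbT0 : 0 ≤ b T := hb_nonneg T (mem_Ici.mpr (ht0.le.trans htT))
      gcongr
    calc v t ≤ a + (t ^ (1-β) * b t) * ∫ s, G s * F s ∂μ := hvt
      _ ≤ a + (t ^ (1-β) * b t) *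
            ((∫ s in (0:ℝ)..t, l s ^ p * w s) ^ (1/p) * (t ^ (2*α+1) * (2/x)) ^ (1/q)) := by
          exact add_le_add_right (mul_le_mul_of_nonneg_left hprod hbt) a
      _ = a + ((t ^ (1-β) * b t) * (t ^ (2*α+1) * (2/x)) ^ (1/q)) *
            (∫ s in (0:ℝ)..t, l s ^ p * w s) ^ (1/p) := by ring
      _ = a + c t * (∫ s in (0:ℝ)..t, l s ^ p * w s) ^ (1/p) := by rw [hct_eq]
      _ ≤ a + c T * (∫ s in (0:ℝ)..t, l s ^ p * w s) ^ (1/p) :=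
          add_le_add_right (mul_le_mul_of_nonneg_right hct_le hIp0) a
  -- Gronwall setup
  set C := (2:ℝ) ^ (p-1) * c T ^ p with hCdef
  have hcT0 : 0 ≤ c T := hcT_nonneg T hT.le
  have hC0 : 0 ≤ C := mul_nonneg (Real.rpow_nonneg (by norm_num) _) (Real.rpow_nonneg hcT0 _)
  set A' := (2:ℝ) ^ (p-1) * a ^ p with hA'def
  have hA'0 : 0 ≤ A' := mul_nonneg (Real.rpow_nonneg (by norm_num) _) (Real.rpow_nonneg ha _)
  set K : ℝ → ℝ := fun s => C * l s ^ p with hKdef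
  have hK_cont : ContinuousOn K (Ioi 0) := by
    apply continuousOn_const.mul
    apply ContinuousOn.rpow_const hl_cont
    intro s hs; exact Or.inr hp0.le
  have hK_nonneg : ∀ s ∈ Ioi (0:ℝ), 0 ≤ K s := fun s hs =>
    mul_nonneg hC0 (Real.rpow_nonneg (hl_nonneg s hs) _)
  have hK_int : IntervalIntegrable K volume 0 T := (hl_lp T hT.le).const_mul C
  have hgron_hyp : ∀ t ∈ Ioc (0:ℝ) T, w t ≤ A' + ∫ s in (0:ℝ)..t, K s * w s := by
    intro t ht
    have hkey := key t ht
    have hIpt := hIp_nonneg t ht.1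
    have hw_le : w t ≤ (a + c T * (∫ s in (0:ℝ)..t, l s ^ p * w s) ^ (1/p)) ^ p :=
      Real.rpow_le_rpow (hv_nonneg t ht.1.le) hkey hp0.le
    have hpow := Stmt6Aux.two_rpow_helper hp1.le ha
      (mul_nonneg hcT0 (Real.rpow_nonneg hIpt (1/p)))
    have hsecond : (c T * (∫ s in (0:ℝ)..t, l s ^ p * w s) ^ (1/p)) ^ p
        = c T ^ p * ∫ s in (0:ℝ)..t, l s ^ p * w s := by
      rw [Real.mul_rpow hcT0 (Real.rpow_nonneg hIpt _),
        ← Real.rpow_mul hIpt, show 1/p*p = 1 from by field_simp, Real.rpow_one]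
    have hint_eq : ∫ s in (0:ℝ)..t, K s * w s = C * ∫ s in (0:ℝ)..t, l s ^ p * w s := by
      simp only [hKdef, mul_assoc]
      exact intervalIntegral.integral_const_mul C _
    rw [hint_eq]
    calc w t ≤ (a + c T * (∫ s in (0:ℝ)..t, l s ^ p * w s) ^ (1/p)) ^ p := hw_le
      _ ≤ 2 ^ (p-1) * (a ^ p + (c T * (∫ s in (0:ℝ)..t, l s ^ p * w s) ^ (1/p)) ^ p) := hpow
      _ = A' + C * ∫ s in (0:ℝ)..t, l s ^ p * w s := by
          rw [hsecond, hA'def, hCdef]; ring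
  have hgron := Stmt6Aux.gronwall hT hA'0 hK_cont hK_nonneg hK_int hw_cont hgron_hyp T
    ⟨hT, le_rfl⟩
  have hKint_eq : ∫ s in (0:ℝ)..T, K s = C * ∫ s in (0:ℝ)..T, l s ^ p := by
    simp only [hKdef]
    exact intervalIntegral.integral_const_mul C _
  rw [hKint_eq] at hgron
  set L := ∫ s in (0:ℝ)..T, l s ^ p with hLdef
  have hwT0 : 0 ≤ w T := hw_nonneg T hT.le
  have hvT : v T ≤ 2 ^ (1-1/p) * a * Real.exp (C * L / p) := by
    have h1 : (w T) ^ (1/p) = v T := by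
      simp only [hwdef]
      rw [← Real.rpow_mul (hv_nonneg T hT.le), show p*(1/p) = 1 from by field_simp,
        Real.rpow_one]
    have h2 : (w T) ^ (1/p) ≤ (A' * Real.exp (C*L)) ^ (1/p) :=
      Real.rpow_le_rpow hwT0 hgron (by positivity)
    have h3 : (A' * Real.exp (C*L)) ^ (1/p) = 2 ^ (1-1/p) * a * Real.exp (C*L/p) := by
      rw [hA'def, Real.mul_rpow (by positivity) (Real.exp_pos _).le,
        Real.mul_rpow (Real.rpow_nonneg (by norm_num) _) (Real.rpow_nonneg ha _),
        ← Real.rpow_mul (by norm_num : (0:ℝ) ≤ 2), ← Real.rpow_mul ha,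
        show (p-1)*(1/p) = 1 - 1/p from by field_simp,
        show p*(1/p) = 1 from by field_simp, Real.rpow_one,
        ← Real.exp_mul, show C*L*(1/p) = C*L/p from by ring]
    rw [← h1, ← h3]
    exact h2
  rw [huv T hT]
  calc T ^ (β-1) * v T ≤ T ^ (β-1) * (2 ^ (1-1/p) * a * Real.exp (C*L/p)) :=
      mul_le_mul_of_nonneg_left hvT (Real.rpow_nonneg hT.le _)
    _ = 2 ^ (1-1/p) * a * T ^ (β-1) * Real.exp ((2 ^ (p-1) * c T ^ p / p) * L) := by
        rw [show C*L/p = (2 ^ (p-1) * c T ^ p / p) * L from by rw [hCdef]; ring]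
        ring
end

section
/- Let a ≥ 0, 0 < γ < 1, β ∈ (0,1), p > 1/β, q = p/(p-1). Let b : [0,∞) → ℝ be a nonnegative nondecreasing continuous function, and let l be a nonnegative function with t^{(1-γ)(1-β)} l(t) continuous on (0,∞) and in Lᵖ_loc[0,∞). If u is a function on (0,∞) with t^{1-β} u(t) continuous and nonnegative on [0,∞) and u(t) ≤ a t^{β-1} + b(t) ∫₀ᵗ (t-s)^{β-1} l(s) u(s)^γ ds for all t ∈ (0,∞), then u(t) ≤ 2^{1-1/p} t^{β-1} (a^{p(1-γ)} + (1-γ) 2^{(p-1)γ} c(t)^p ∫₀ᵗ s^{p(1-γ)(1-β)} l(s)^p ds)^{1/(p(1-γ))} for all t ∈ (0,∞), where c(t) = 2^{1/q} b(t) t^{β-1+1/q} / (qβ-q+1)^{1/q}. -/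
open MeasureTheory Set Filter

lemma stmt7_subadd {x y pp : ℝ} (hx : 0 ≤ x) (hy : 0 ≤ y) (hp : 0 ≤ pp) (hp1 : pp ≤ 1) :
    (x + y) ^ pp ≤ x ^ pp + y ^ pp := by
  have h := NNReal.rpow_add_le_add_rpow (x.toNNReal) (y.toNNReal) hp hp1
  have h2 : ((x.toNNReal + y.toNNReal : NNReal) : ℝ) = x + y := by
    simp [Real.coe_toNNReal, hx, hy]
  calc (x+y)^pp = (((x.toNNReal + y.toNNReal : NNReal):ℝ))^pp := by rw [h2]
    _ = (((x.toNNReal + y.toNNReal) ^ pp : NNReal) : ℝ) := by rw [NNReal.coe_rpow]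
    _ ≤ (((x.toNNReal ^ pp + y.toNNReal ^ pp : NNReal)) : ℝ) := by exact_mod_cast h
    _ = x ^ pp + y ^ pp := by
        push_cast [NNReal.coe_rpow]
        simp [Real.coe_toNNReal x hx, Real.coe_toNNReal y hy]

lemma stmt7_kernel_ptwise {x t : ℝ} (hx0 : 0 < x) (hx1 : x ≤ 1) (ht : 0 < t) :
    ∀ s ∈ Icc (0:ℝ) t, (t-s)^(x-1) * s^(x-1) ≤ t^(x-1)*(s^(x-1)+(t-s)^(x-1)) := by
  intro s hs
  rcases eq_or_lt_of_le hs.1 with h0 | h0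
  · -- s = 0
    rw [← h0]
    simp only [sub_zero]
    have h2 : (0:ℝ) ≤ (0:ℝ)^(x-1) := Real.rpow_nonneg le_rfl _
    have h3 : (0:ℝ) ≤ t^(x-1) := Real.rpow_nonneg ht.le _
    nlinarith [mul_nonneg h3 h3]
  rcases eq_or_lt_of_le hs.2 with h1 | h1
  · -- s = t
    subst h1
    have h2 : (0:ℝ) ≤ s ^ (x-1) := Real.rpow_nonneg hs.1 _
    have h3 : (0:ℝ) ≤ (s-s) ^ (x-1) := Real.rpow_nonneg (by linarith) _
    nlinarith [mul_nonneg h2 h2]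
  · have hts : 0 < t - s := by linarith
    have hsub : t^(1-x) ≤ s^(1-x) + (t-s)^(1-x) := by
      have := stmt7_subadd h0.le hts.le (by linarith : (0:ℝ) ≤ 1-x) (by linarith)
      simpa [show s + (t-s) = t by ring] using this
    set P := t^(x-1) * s^(x-1) * (t-s)^(x-1) with hP
    have hPn : 0 ≤ P := by positivity
    have e1 : t^(x-1) * t^(1-x) = 1 := by rw [← Real.rpow_add ht]; norm_num
    have e2 : s^(x-1) * s^(1-x) = 1 := by rw [← Real.rpow_add h0]; norm_num
    have e3 : (t-s)^(x-1) * (t-s)^(1-x) = 1 := by rw [← Real.rpow_add hts]; norm_num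
    have hm := mul_le_mul_of_nonneg_left hsub hPn
    calc (t-s)^(x-1) * s^(x-1)
        = P * t^(1-x) := by
          rw [show P * t^(1-x) = (t^(x-1)*t^(1-x)) * (s^(x-1)*(t-s)^(x-1)) from by ring, e1]
          ring
      _ ≤ P * (s^(1-x) + (t-s)^(1-x)) := hm
      _ = t^(x-1)*(s^(x-1)+(t-s)^(x-1)) := by
          rw [mul_add, show P * s^(1-x) = (s^(x-1)*s^(1-x)) * (t^(x-1)*(t-s)^(x-1)) from by ring,
            show P * (t-s)^(1-x) = ((t-s)^(x-1)*(t-s)^(1-x)) * (t^(x-1)*s^(x-1)) from by ring,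
            e2, e3]
          ring


lemma stmt7_kernel_integrable {x t : ℝ} (hx0 : 0 < x) (hx1 : x ≤ 1) (ht : 0 < t) :
    IntervalIntegrable (fun s => (t-s)^(x-1) * s^(x-1)) volume 0 t := by
  have hg1 : IntervalIntegrable (fun s : ℝ => s^(x-1)) volume 0 t :=
    intervalIntegral.intervalIntegrable_rpow' (by linarith)
  have hg2 : IntervalIntegrable (fun s : ℝ => (t-s)^(x-1)) volume 0 t := by
    have h := (intervalIntegral.intervalIntegrable_rpow' (a := 0) (b := t)
      (r := x-1) (by linarith)).comp_sub_left t
    simpa using h.symm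
  have hg : IntervalIntegrable (fun s : ℝ => t^(x-1)*(s^(x-1)+(t-s)^(x-1))) volume 0 t :=
    ((hg1.add hg2).const_mul _)
  have m1 : Measurable (fun s : ℝ => s ^ (x-1)) := by
    apply measurable_of_continuousOn_compl_singleton 0
    intro s hs
    exact (Real.continuousAt_rpow_const s (x-1)
      (Or.inl (by simpa using hs))).continuousWithinAt
  have m2 : Measurable (fun s : ℝ => (t-s) ^ (x-1)) :=
    m1.comp (measurable_const.sub measurable_id)
  apply hg.mono_fun
  · exact (m2.mul m1).aestronglyMeasurable
  · rw [Filter.EventuallyLE, ae_restrict_iff' measurableSet_uIoc]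
    apply Filter.Eventually.of_forall
    intro s hs
    rw [uIoc_of_le ht.le] at hs
    have hsI : s ∈ Icc (0:ℝ) t := ⟨hs.1.le, hs.2⟩
    have h1 := stmt7_kernel_ptwise hx0 hx1 ht s hsI
    have h2 : (0:ℝ) ≤ (t-s)^(x-1) * s^(x-1) :=
      mul_nonneg (Real.rpow_nonneg (by linarith [hs.2] : (0:ℝ) ≤ t - s) _)
        (Real.rpow_nonneg hs.1.le _)
    simp only [Real.norm_eq_abs]
    rw [abs_of_nonneg h2]
    exact h1.trans (le_abs_self _)

lemma stmt7_kernel_bound {x t : ℝ} (hx0 : 0 < x) (hx1 : x ≤ 1) (ht : 0 < t) :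
    (∫ s in (0:ℝ)..t, (t-s)^(x-1) * s^(x-1)) ≤ 2 * t^(2*x-1) / x := by
  have hg1 : IntervalIntegrable (fun s : ℝ => s^(x-1)) volume 0 t :=
    intervalIntegral.intervalIntegrable_rpow' (by linarith)
  have hg2 : IntervalIntegrable (fun s : ℝ => (t-s)^(x-1)) volume 0 t := by
    have h := (intervalIntegral.intervalIntegrable_rpow' (a := 0) (b := t)
      (r := x-1) (by linarith)).comp_sub_left t
    simpa using h.symm
  have hint := stmt7_kernel_integrable hx0 hx1 ht
  have hmono := intervalIntegral.integral_mono_on ht.le hint ((hg1.add hg2).const_mul (t^(x-1)))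
    (stmt7_kernel_ptwise hx0 hx1 ht)
  have hI1 : (∫ s in (0:ℝ)..t, s^(x-1)) = t^x / x := by
    rw [integral_rpow (Or.inl (by linarith))]
    rw [Real.zero_rpow (by linarith : x - 1 + 1 ≠ 0)]
    norm_num [sub_add_cancel]
  have hI2 : (∫ s in (0:ℝ)..t, (t-s)^(x-1)) = t^x / x := by
    rw [intervalIntegral.integral_comp_sub_left (fun s => s^(x-1)) t]
    simp only [sub_zero, sub_self]
    rw [integral_rpow (Or.inl (by linarith))]
    rw [Real.zero_rpow (by linarith : x - 1 + 1 ≠ 0)]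
    norm_num [sub_add_cancel]
  have hval : (∫ s in (0:ℝ)..t, t^(x-1)*(s^(x-1)+(t-s)^(x-1))) = 2 * t^(2*x-1) / x := by
    rw [intervalIntegral.integral_const_mul, intervalIntegral.integral_add hg1 hg2, hI1, hI2]
    have h2 : t^(x-1) * t^x = t^(2*x-1) := by
      rw [← Real.rpow_add ht]; ring_nf
    calc t^(x-1) * (t^x/x + t^x/x) = (t^(x-1)*t^x) * 2 / x := by ring
      _ = 2*t^(2*x-1)/x := by rw [h2]; ring
  calc (∫ s in (0:ℝ)..t, (t-s)^(x-1) * s^(x-1))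
      ≤ ∫ s in (0:ℝ)..t, t^(x-1)*(s^(x-1)+(t-s)^(x-1)) := hmono
    _ = 2 * t^(2*x-1) / x := hval

lemma stmt7_two_rpow {x y pp : ℝ} (hx : 0 ≤ x) (hy : 0 ≤ y) (hp : 1 ≤ pp) :
    (x + y) ^ pp ≤ 2 ^ (pp-1) * (x ^ pp + y ^ pp) := by
  have h := NNReal.rpow_add_le_mul_rpow_add_rpow (x.toNNReal) (y.toNNReal) hp
  have h2 : ((x.toNNReal + y.toNNReal : NNReal) : ℝ) = x + y := by
    simp [Real.coe_toNNReal, hx, hy]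
  calc (x+y)^pp = (((x.toNNReal + y.toNNReal : NNReal):ℝ))^pp := by rw [h2]
    _ = (((x.toNNReal + y.toNNReal) ^ pp : NNReal) : ℝ) := by rw [NNReal.coe_rpow]
    _ ≤ ((((2:NNReal)^(pp-1) * (x.toNNReal ^ pp + y.toNNReal ^ pp) : NNReal)) : ℝ) := by
        exact_mod_cast h
    _ = 2 ^ (pp-1) * (x ^ pp + y ^ pp) := by
        push_cast [NNReal.coe_rpow]
        simp [Real.coe_toNNReal x hx, Real.coe_toNNReal y hy]

lemma stmt7_meas (r : ℝ) : Measurable (fun s : ℝ => s ^ r) := by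
  apply measurable_of_continuousOn_compl_singleton 0
  intro s hs
  exact (Real.continuousAt_rpow_const s r (Or.inl (by simpa using hs))).continuousWithinAt


lemma stmt7_bihari {A C γ t : ℝ} (hA : 0 < A) (hC : 0 ≤ C) (hγ0 : 0 < γ) (hγ1 : γ < 1)
    (ht : 0 < t) (K w : ℝ → ℝ)
    (hK_cont : ContinuousOn K (Ioi 0)) (hK_nonneg : ∀ s ∈ Icc (0:ℝ) t, 0 ≤ K s)
    (hK_int : IntervalIntegrable K volume 0 t)
    (hw_cont : ContinuousOn w (Icc 0 t)) (hw_nonneg : ∀ s ∈ Icc (0:ℝ) t, 0 ≤ w s)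
    (hw : ∀ τ ∈ Ioc (0:ℝ) t, w τ ≤ A + C * ∫ s in (0:ℝ)..τ, K s * w s ^ γ) :
    w t ≤ (A ^ (1-γ) + (1-γ) * C * ∫ s in (0:ℝ)..t, K s) ^ (1/(1-γ)) := by
  have h1γ : 0 < 1 - γ := by linarith
  have hwγ_cont : ContinuousOn (fun s => w s ^ γ) (Icc 0 t) :=
    hw_cont.rpow_const (fun s _ => Or.inr hγ0.le)
  have huIcc : uIcc (0:ℝ) t = Icc 0 t := uIcc_of_le ht.le
  have hKw_int : IntervalIntegrable (fun s => K s * w s ^ γ) volume 0 t :=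
    hK_int.mul_continuousOn (by rwa [huIcc])
  set Φ : ℝ → ℝ := fun τ => A + C * ∫ s in (0:ℝ)..τ, K s * w s ^ γ with hΦdef
  have hKw_nonneg : ∀ s ∈ Icc (0:ℝ) t, 0 ≤ K s * w s ^ γ := fun s hs =>
    mul_nonneg (hK_nonneg s hs) (Real.rpow_nonneg (hw_nonneg s hs) _)
  have hΦ_ge : ∀ τ ∈ Icc (0:ℝ) t, A ≤ Φ τ := by
    intro τ hτ
    have h0 : 0 ≤ ∫ s in (0:ℝ)..τ, K s * w s ^ γ := by
      apply intervalIntegral.integral_nonneg hτ.1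
      intro s hs
      exact hKw_nonneg s ⟨hs.1, hs.2.trans hτ.2⟩
    simp only [hΦdef]
    nlinarith
  have hΦ_pos : ∀ τ ∈ Icc (0:ℝ) t, 0 < Φ τ := fun τ hτ => lt_of_lt_of_le hA (hΦ_ge τ hτ)
  have hwΦ : ∀ τ ∈ Ioc (0:ℝ) t, w τ ≤ Φ τ := hw
  have hΦ_cont : ContinuousOn Φ (Icc 0 t) := by
    apply continuousOn_const.add (continuousOn_const.mul ?_)
    have := intervalIntegral.continuousOn_primitive_interval
      (huIcc ▸ (intervalIntegrable_iff_integrableOn_Icc_of_le ht.le).mp hKw_int)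
    rwa [huIcc] at this
  set G : ℝ → ℝ := fun τ => Φ τ ^ (1-γ) with hGdef
  have hG_cont : ContinuousOn G (Icc 0 t) :=
    hΦ_cont.rpow_const (fun s hs => Or.inl (hΦ_pos s hs).ne')
  set D : ℝ → ℝ := fun τ => (1-γ) * C * (∫ s in (0:ℝ)..τ, K s) - G τ with hDdef
  have hD_cont : ContinuousOn D (Icc 0 t) := by
    apply ContinuousOn.sub ?_ hG_cont
    apply continuousOn_const.mul
    have := intervalIntegral.continuousOn_primitive_interval
      (huIcc ▸ (intervalIntegrable_iff_integrableOn_Icc_of_le ht.le).mp hK_int)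
    rwa [huIcc] at this
  have hD_deriv : ∀ τ ∈ Ioo (0:ℝ) t, ∃ d, HasDerivAt D d τ ∧ 0 ≤ d := by
    intro τ hτ
    have hτIcc : τ ∈ Icc (0:ℝ) t := ⟨hτ.1.le, hτ.2.le⟩
    have hopen : Ioo (0:ℝ) t ∈ nhds τ := Ioo_mem_nhds hτ.1 hτ.2
    have hwct : ContinuousAt w τ :=
      hw_cont.continuousAt (mem_nhds_iff.mpr ⟨Ioo 0 t, Ioo_subset_Icc_self, isOpen_Ioo, hτ⟩)
    have hKct : ContinuousAt K τ :=
      hK_cont.continuousAt (mem_nhds_iff.mpr ⟨Ioi 0, subset_rfl, isOpen_Ioi, hτ.1⟩)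
    have hKwct : ContinuousAt (fun s => K s * w s ^ γ) τ :=
      hKct.mul (hwct.rpow_const (Or.inr hγ0.le))
    have hKwmeas : StronglyMeasurableAtFilter (fun s => K s * w s ^ γ) (nhds τ) volume :=
      ⟨Ioo 0 t, hopen, ((hK_cont.mono Ioo_subset_Ioi_self).mul
        (hwγ_cont.mono Ioo_subset_Icc_self)).aestronglyMeasurable measurableSet_Ioo⟩
    have hKmeas : StronglyMeasurableAtFilter K (nhds τ) volume :=
      ⟨Ioo 0 t, hopen, (hK_cont.mono Ioo_subset_Ioi_self).aestronglyMeasurable measurableSet_Ioo⟩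
    have hΦ' : HasDerivAt Φ (C * (K τ * w τ ^ γ)) τ := by
      apply HasDerivAt.const_add
      apply HasDerivAt.const_mul
      exact intervalIntegral.integral_hasDerivAt_right
        (hKw_int.mono_set (by rw [huIcc, uIcc_of_le hτ.1.le]; exact Icc_subset_Icc le_rfl hτ.2.le))
        hKwmeas hKwct
    have hP' : HasDerivAt (fun τ => ∫ s in (0:ℝ)..τ, K s) (K τ) τ :=
      intervalIntegral.integral_hasDerivAt_right
        (hK_int.mono_set (by rw [huIcc, uIcc_of_le hτ.1.le]; exact Icc_subset_Icc le_rfl hτ.2.le))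
        hKmeas hKct
    have hG' : HasDerivAt G ((C * (K τ * w τ ^ γ)) * (1-γ) * Φ τ ^ (1-γ-1)) τ :=
      hΦ'.rpow_const (Or.inl (hΦ_pos τ hτIcc).ne')
    refine ⟨(1-γ)*C*(K τ) - (C * (K τ * w τ ^ γ)) * (1-γ) * Φ τ ^ (1-γ-1),
      ((hP'.const_mul _).sub hG'), ?_⟩
    have hΦτ := hΦ_pos τ hτIcc
    have hexp : (1 - γ - 1 : ℝ) = -γ := by ring
    have h4 : (w τ ^ γ) * Φ τ ^ (-γ) ≤ 1 := by
      have h1 : w τ ^ γ ≤ Φ τ ^ γ := Real.rpow_le_rpow (hw_nonneg τ hτIcc)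
        (hwΦ τ ⟨hτ.1, hτ.2.le⟩) hγ0.le
      have h2 : Φ τ ^ γ * Φ τ ^ (-γ) = 1 := by
        rw [← Real.rpow_add hΦτ]; norm_num
      calc (w τ ^ γ) * Φ τ ^ (-γ) ≤ Φ τ ^ γ * Φ τ ^ (-γ) :=
            mul_le_mul_of_nonneg_right h1 (Real.rpow_nonneg hΦτ.le _)
        _ = 1 := h2
    have hK0 : 0 ≤ K τ := hK_nonneg τ hτIcc
    have h5 : (C * (K τ * w τ ^ γ)) * (1-γ) * Φ τ ^ (1-γ-1) ≤ (1-γ)*C*(K τ) := by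
      rw [hexp]
      calc (C * (K τ * w τ ^ γ)) * (1-γ) * Φ τ ^ (-γ)
          = ((1-γ)*C*(K τ)) * ((w τ ^ γ) * Φ τ ^ (-γ)) := by ring
        _ ≤ ((1-γ)*C*(K τ)) * 1 := mul_le_mul_of_nonneg_left h4 (by positivity)
        _ = (1-γ)*C*(K τ) := mul_one _
    linarith
  have hD_mono : MonotoneOn D (Icc 0 t) := by
    apply monotoneOn_of_deriv_nonneg (convex_Icc 0 t) hD_cont
    · intro τ hτ
      rw [interior_Icc] at hτ
      obtain ⟨d, hd, _⟩ := hD_deriv τ hτ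
      exact hd.differentiableAt.differentiableWithinAt
    · intro τ hτ
      rw [interior_Icc] at hτ
      obtain ⟨d, hd, hd0⟩ := hD_deriv τ hτ
      rw [hd.deriv]; exact hd0
  have hDt : D 0 ≤ D t := hD_mono (left_mem_Icc.mpr ht.le) (right_mem_Icc.mpr ht.le) ht.le
  have hG0 : G 0 = A ^ (1-γ) := by simp [hGdef, hΦdef]
  have hGt : G t ≤ A ^ (1-γ) + (1-γ) * C * ∫ s in (0:ℝ)..t, K s := by
    simp only [hDdef, intervalIntegral.integral_same, mul_zero, zero_sub, hG0] at hDt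
    linarith
  have hΦt := hΦ_pos t (right_mem_Icc.mpr ht.le)
  calc w t ≤ Φ t := hwΦ t ⟨ht, le_rfl⟩
    _ = (Φ t ^ (1-γ)) ^ (1/(1-γ)) := by
        rw [← Real.rpow_mul hΦt.le, mul_one_div, div_self h1γ.ne', Real.rpow_one]
    _ ≤ (A ^ (1-γ) + (1-γ) * C * ∫ s in (0:ℝ)..t, K s) ^ (1/(1-γ)) := by
        apply Real.rpow_le_rpow (Real.rpow_nonneg hΦt.le _) hGt (by positivity)

set_option maxHeartbeats 1000000 in
lemma stmt7_main (a γ β p q : ℝ) (ha : 0 < a) (hγ : γ ∈ Ioo (0:ℝ) 1)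
    (hβ : β ∈ Ioo (0:ℝ) 1) (hp : 1/β < p) (hq : q = p / (p - 1))
    (b : ℝ → ℝ)
    (hb_cont : ContinuousOn b (Ici 0)) (hb_mono : MonotoneOn b (Ici 0))
    (hb_nonneg : ∀ t ∈ Ici (0:ℝ), 0 ≤ b t)
    (l : ℝ → ℝ)
    (hl_nonneg : ∀ t ∈ Ioi (0:ℝ), 0 ≤ l t)
    (hl_cont : ContinuousOn (fun t => t ^ ((1 - γ) * (1 - β)) * l t) (Ioi 0))
    (hl_lp : ∀ t : ℝ, 0 ≤ t →
      IntervalIntegrable (fun s => (s ^ ((1 - γ) * (1 - β)) * l s) ^ p) volume 0 t)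
    (u : ℝ → ℝ)
    (hu_cont : ContinuousOn (fun t => t ^ (1 - β) * u t) (Ici 0))
    (hu_nonneg : ∀ t ∈ Ici (0:ℝ), 0 ≤ t ^ (1 - β) * u t)
    (hu : ∀ t ∈ Ioi (0:ℝ),
      u t ≤ a * t ^ (β - 1) + b t * ∫ s in (0:ℝ)..t, (t - s) ^ (β - 1) * (l s * u s ^ γ))
    (c : ℝ → ℝ)
    (hc : ∀ t, c t = (2:ℝ) ^ (1/q) * b t * t ^ (β - 1 + 1/q) / (q * β - q + 1) ^ (1/q)) :
    ∀ t ∈ Ioi (0:ℝ),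
      u t ≤ (2:ℝ) ^ (1 - 1/p) * t ^ (β - 1) *
        (a ^ (p * (1 - γ)) + (1 - γ) * (2:ℝ) ^ ((p - 1) * γ) * c t ^ p *
          ∫ s in (0:ℝ)..t, s ^ (p * (1 - γ) * (1 - β)) * l s ^ p)
        ^ (1 / (p * (1 - γ))) := by
  obtain ⟨hγ0, hγ1⟩ := hγ
  obtain ⟨hβ0, hβ1⟩ := hβ
  have hp1 : 1 < p := lt_trans (by rw [lt_div_iff₀ hβ0]; linarith) hp
  have hp0 : 0 < p := by linarith
  have hpβ : 1 < p * β := by rwa [div_lt_iff₀ hβ0] at hp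
  have hq1 : 1 < q := by rw [hq, lt_div_iff₀ (by linarith : (0:ℝ) < p - 1)]; linarith
  have hq0 : 0 < q := by linarith
  have hpq : p.HolderConjugate q := hq ▸ Real.HolderConjugate.conjExponent hp1
  set x := q * β - q + 1 with hxdef
  have hxeq : x = (p*β - 1)/(p-1) := by
    have h : p - 1 ≠ 0 := by linarith
    rw [hxdef, hq]; field_simp; ring
  have hx0 : 0 < x := by rw [hxeq]; apply div_pos <;> linarith
  have hx1 : x ≤ 1 := by rw [hxdef]; nlinarith
  have hx_exp : x - 1 = (β-1)*q := by rw [hxdef]; ring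
  set v := fun τ : ℝ => τ^(1-β) * u τ with hvdef
  set L := fun s : ℝ => s^((1-γ)*(1-β)) * l s with hLdef
  set K := fun s : ℝ => (L s)^p with hKdef
  have hv_cont : ContinuousOn v (Ici 0) := hu_cont
  have hv_nonneg : ∀ s ∈ Ici (0:ℝ), 0 ≤ v s := hu_nonneg
  have hL_nonneg : ∀ s ∈ Ioi (0:ℝ), 0 ≤ L s := fun s hs =>
    mul_nonneg (Real.rpow_nonneg (le_of_lt hs) _) (hl_nonneg s hs)
  have hK_nonneg : ∀ s : ℝ, 0 ≤ s → 0 ≤ K s := by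
    intro s hs
    rcases eq_or_lt_of_le hs with h | h
    · simp only [hKdef, hLdef, ← h]
      rw [Real.zero_rpow (by nlinarith : (1-γ)*(1-β) ≠ 0), zero_mul,
        Real.zero_rpow hp0.ne']
    · exact Real.rpow_nonneg (hL_nonneg s h) _
  have hK_cont : ContinuousOn K (Ioi 0) :=
    hl_cont.rpow_const (fun s _ => Or.inr hp0.le)
  have hu_eq : ∀ s : ℝ, 0 < s → u s = s^(β-1) * v s := by
    intro s hs
    simp only [hvdef]
    rw [← mul_assoc, ← Real.rpow_add hs]
    norm_num
  have hv_eq : ∀ s : ℝ, 0 < s → v s = s^(1-β) * u s := fun s _ => rfl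
  -- Core Hölder estimate
  have core : ∀ τ : ℝ, 0 < τ →
      v τ ≤ a + c τ * (∫ s in (0:ℝ)..τ, K s * (v s)^(p*γ))^(1/p) := by
    intro τ hτ
    set μ := volume.restrict (Ioc (0:ℝ) τ) with hμdef
    set f := fun s : ℝ => (τ-s)^(β-1) * s^(β-1) with hfdef
    set g := fun s : ℝ => L s * (v s)^γ with hgdef
    have hfg : ∀ s ∈ Ioc (0:ℝ) τ, (τ-s)^(β-1) * (l s * u s^γ) = f s * g s := by
      intro s hs
      have hs0 : 0 < s := hs.1
      have hvs : 0 ≤ v s := hv_nonneg s hs0.le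
      have e1 : u s ^ γ = s^((β-1)*γ) * (v s)^γ := by
        rw [hu_eq s hs0, Real.mul_rpow (Real.rpow_nonneg hs0.le _) hvs,
          ← Real.rpow_mul hs0.le]
      have e2 : s^(β-1) * L s = s^((β-1)*γ) * l s := by
        simp only [hLdef]
        rw [← mul_assoc, ← Real.rpow_add hs0,
          show β-1 + (1-γ)*(1-β) = (β-1)*γ from by ring]
      simp only [hfdef, hgdef]
      calc (τ-s)^(β-1) * (l s * u s^γ)
          = (τ-s)^(β-1) * (l s * (s^((β-1)*γ) * (v s)^γ)) := by rw [e1]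
        _ = (τ-s)^(β-1) * ((s^((β-1)*γ) * l s) * (v s)^γ) := by ring
        _ = (τ-s)^(β-1) * ((s^(β-1) * L s) * (v s)^γ) := by rw [e2]
        _ = (τ-s)^(β-1) * s^(β-1) * (L s * (v s)^γ) := by ring
    have hI_eq : (∫ s in (0:ℝ)..τ, (τ-s)^(β-1) * (l s * u s^γ))
        = ∫ s in Ioc (0:ℝ) τ, f s * g s := by
      rw [intervalIntegral.integral_of_le hτ.le]
      exact setIntegral_congr_fun measurableSet_Ioc hfg
    have hf_nonneg : 0 ≤ᵐ[μ] f := (ae_restrict_iff' measurableSet_Ioc).mpr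
      (Filter.Eventually.of_forall fun s hs =>
        mul_nonneg (Real.rpow_nonneg (by linarith [hs.2]) _) (Real.rpow_nonneg hs.1.le _))
    have hg_nonneg : 0 ≤ᵐ[μ] g := (ae_restrict_iff' measurableSet_Ioc).mpr
      (Filter.Eventually.of_forall fun s hs =>
        mul_nonneg (hL_nonneg s hs.1) (Real.rpow_nonneg (hv_nonneg s hs.1.le) _))
    have hf_meas : AEStronglyMeasurable f μ :=
      (((stmt7_meas (β-1)).comp (measurable_const.sub measurable_id)).mul
        (stmt7_meas (β-1))).aestronglyMeasurable
    have hg_meas : AEStronglyMeasurable g μ := by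
      apply ContinuousOn.aestronglyMeasurable ?_ measurableSet_Ioc
      exact (hl_cont.mono Ioc_subset_Ioi_self).mul
        (((hv_cont.mono (fun s hs => le_of_lt hs.1)).mono subset_rfl).rpow_const
          (fun s _ => Or.inr hγ0.le))
    have hfq_eq : ∀ s ∈ Ioc (0:ℝ) τ, f s ^ q = (τ-s)^(x-1) * s^(x-1) := by
      intro s hs
      have h1 : (0:ℝ) ≤ τ - s := by linarith [hs.2]
      simp only [hfdef]
      rw [Real.mul_rpow (Real.rpow_nonneg h1 _) (Real.rpow_nonneg hs.1.le _),
        hx_exp, Real.rpow_mul h1, Real.rpow_mul hs.1.le]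
    have hfq_int : Integrable (fun s => f s ^ q) μ := by
      have hk := (stmt7_kernel_integrable hx0 hx1 hτ).1
      exact hk.congr ((ae_restrict_mem measurableSet_Ioc).mono
        (fun s hs => (hfq_eq s hs).symm))
    have hgp_eq : ∀ s ∈ Ioc (0:ℝ) τ, g s ^ p = K s * (v s)^(p*γ) := by
      intro s hs
      have hvs : 0 ≤ v s := hv_nonneg s hs.1.le
      simp only [hgdef, hKdef]
      rw [Real.mul_rpow (hL_nonneg s hs.1) (Real.rpow_nonneg hvs _),
        ← Real.rpow_mul hvs, mul_comm γ p]
    have hgp_int : Integrable (fun s => g s ^ p) μ := by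
      have h1 : IntervalIntegrable (fun s => K s * (v s)^(p*γ)) volume 0 τ := by
        apply (hl_lp τ hτ.le).mul_continuousOn
        rw [uIcc_of_le hτ.le]
        exact (hv_cont.mono (Icc_subset_Ici_self)).rpow_const (fun s _ => Or.inr (by positivity))
      exact h1.1.congr ((ae_restrict_mem measurableSet_Ioc).mono
        (fun s hs => (hgp_eq s hs).symm))
    have hf_mem : MemLp f (ENNReal.ofReal q) μ := by
      have A : ENNReal.ofReal q ≠ 0 := by
        rw [Ne, ENNReal.ofReal_eq_zero, not_le]; exact hq0
      have B : ENNReal.ofReal q ≠ ⊤ := ENNReal.ofReal_ne_top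
      rw [← memLp_norm_rpow_iff hf_meas A B, ENNReal.toReal_ofReal hq0.le,
        ENNReal.div_self A B, memLp_one_iff_integrable]
      apply hfq_int.congr
      filter_upwards [hf_nonneg] with s hs
      rw [Real.norm_of_nonneg hs]
    have hg_mem : MemLp g (ENNReal.ofReal p) μ := by
      have A : ENNReal.ofReal p ≠ 0 := by
        rw [Ne, ENNReal.ofReal_eq_zero, not_le]; exact hp0
      have B : ENNReal.ofReal p ≠ ⊤ := ENNReal.ofReal_ne_top
      rw [← memLp_norm_rpow_iff hg_meas A B, ENNReal.toReal_ofReal hp0.le,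
        ENNReal.div_self A B, memLp_one_iff_integrable]
      apply hgp_int.congr
      filter_upwards [hg_nonneg] with s hs
      rw [Real.norm_of_nonneg hs]
    have hHold := MeasureTheory.integral_mul_le_Lp_mul_Lq_of_nonneg hpq.symm
      hf_nonneg hg_nonneg hf_mem hg_mem
    have hfq_val : (∫ s, f s ^ q ∂μ) ≤ 2 * τ^(2*x-1)/x := by
      have he : (∫ s, f s ^ q ∂μ) = ∫ s in (0:ℝ)..τ, (τ-s)^(x-1)*s^(x-1) := by
        rw [intervalIntegral.integral_of_le hτ.le]
        exact setIntegral_congr_fun measurableSet_Ioc hfq_eq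
      rw [he]; exact stmt7_kernel_bound hx0 hx1 hτ
    have hfq_nonneg : 0 ≤ ∫ s, f s ^ q ∂μ :=
      integral_nonneg_of_ae (hf_nonneg.mono fun s hs => Real.rpow_nonneg hs _)
    have hgp_nonneg : 0 ≤ ∫ s, g s ^ p ∂μ :=
      integral_nonneg_of_ae (hg_nonneg.mono fun s hs => Real.rpow_nonneg hs _)
    have hfq_rpow : (∫ s, f s ^ q ∂μ)^(1/q) ≤ (2*τ^(2*x-1)/x)^(1/q) :=
      Real.rpow_le_rpow hfq_nonneg hfq_val (by positivity)
    have hX : (∫ s, g s ^ p ∂μ) = ∫ s in (0:ℝ)..τ, K s * (v s)^(p*γ) := by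
      rw [intervalIntegral.integral_of_le hτ.le]
      exact setIntegral_congr_fun measurableSet_Ioc hgp_eq
    have hbτ : 0 ≤ b τ := hb_nonneg τ (le_of_lt hτ)
    have step1 : u τ ≤ a*τ^(β-1) + b τ * ∫ s in Ioc (0:ℝ) τ, f s * g s := by
      have := hu τ hτ
      rwa [hI_eq] at this
    have step2 : v τ ≤ a + τ^(1-β) * b τ * ∫ s in Ioc (0:ℝ) τ, f s * g s := by
      have h2 := mul_le_mul_of_nonneg_left step1 (Real.rpow_nonneg hτ.le (1-β))
      have h3 : τ^(1-β) * (a * τ^(β-1)) = a := by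
        rw [show τ^(1-β) * (a * τ^(β-1)) = a * (τ^(1-β)*τ^(β-1)) from by ring,
          ← Real.rpow_add hτ, show (1-β)+(β-1) = 0 from by ring, Real.rpow_zero, mul_one]
      calc v τ = τ^(1-β) * u τ := rfl
        _ ≤ τ^(1-β) * (a*τ^(β-1) + b τ * ∫ s in Ioc (0:ℝ) τ, f s * g s) := h2
        _ = a + τ^(1-β) * b τ * ∫ s in Ioc (0:ℝ) τ, f s * g s := by
            rw [mul_add, h3]; ring
    have step3 : (∫ s in Ioc (0:ℝ) τ, f s * g s)
        ≤ (2*τ^(2*x-1)/x)^(1/q) * (∫ s in (0:ℝ)..τ, K s * (v s)^(p*γ))^(1/p) := by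
      rw [← hX]
      calc (∫ s in Ioc (0:ℝ) τ, f s * g s) = ∫ s, f s * g s ∂μ := rfl
        _ ≤ (∫ s, f s ^ q ∂μ)^(1/q) * (∫ s, g s ^ p ∂μ)^(1/p) := hHold
        _ ≤ (2*τ^(2*x-1)/x)^(1/q) * (∫ s, g s ^ p ∂μ)^(1/p) :=
            mul_le_mul_of_nonneg_right hfq_rpow (Real.rpow_nonneg hgp_nonneg _)
    have hcτ : τ^(1-β) * b τ * (2*τ^(2*x-1)/x)^(1/q) = c τ := by
      have e0 : (2*τ^(2*x-1)/x)^(1/q) = 2^(1/q) * τ^((2*x-1)*(1/q)) / x^(1/q) := by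
        rw [Real.div_rpow (by positivity) hx0.le,
          Real.mul_rpow (by norm_num : (0:ℝ) ≤ 2) (Real.rpow_nonneg hτ.le _),
          ← Real.rpow_mul hτ.le]
      have e : τ^(1-β) * τ^((2*x-1)*(1/q)) = τ^(β-1+1/q) := by
        rw [← Real.rpow_add hτ]
        congr 1
        rw [hxdef]
        have hqne : q ≠ 0 := hq0.ne'
        field_simp
        ring
      rw [hc τ, e0, ← e]
      ring
    have hXnn : 0 ≤ (∫ s in (0:ℝ)..τ, K s * (v s)^(p*γ))^(1/p) := by
      rw [← hX]; exact Real.rpow_nonneg hgp_nonneg _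
    calc v τ ≤ a + τ^(1-β) * b τ * ∫ s in Ioc (0:ℝ) τ, f s * g s := step2
      _ ≤ a + τ^(1-β) * b τ *
          ((2*τ^(2*x-1)/x)^(1/q) * (∫ s in (0:ℝ)..τ, K s * (v s)^(p*γ))^(1/p)) := by
          have hnn : 0 ≤ τ^(1-β) * b τ := mul_nonneg (Real.rpow_nonneg hτ.le _) hbτ
          have := mul_le_mul_of_nonneg_left step3 hnn
          linarith
      _ = a + c τ * (∫ s in (0:ℝ)..τ, K s * (v s)^(p*γ))^(1/p) := by
          rw [← hcτ]; ring
  intro t ht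
  rw [mem_Ioi] at ht
  set W := fun τ : ℝ => (v τ)^p with hWdef
  have h1γ : 0 < 1 - γ := by linarith
  have hct_nonneg : ∀ τ : ℝ, 0 ≤ τ → 0 ≤ c τ := by
    intro τ hτ
    rw [hc τ]
    apply div_nonneg _ (Real.rpow_nonneg hx0.le _)
    exact mul_nonneg (mul_nonneg (Real.rpow_nonneg (by norm_num) _) (hb_nonneg τ hτ))
      (Real.rpow_nonneg hτ _)
  set A := (2:ℝ)^(p-1) * a^p with hAdef
  set C := (2:ℝ)^(p-1) * (c t)^p with hCdef
  have hA : 0 < A := by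
    rw [hAdef]
    exact mul_pos (Real.rpow_pos_of_pos two_pos _) (Real.rpow_pos_of_pos ha _)
  have hC : 0 ≤ C := by
    rw [hCdef]
    exact mul_nonneg (Real.rpow_nonneg (by norm_num) _)
      (Real.rpow_nonneg (hct_nonneg t ht.le) _)
  have hexp_nonneg : 0 ≤ β - 1 + 1/q := by
    have he : β - 1 + 1/q = x/q := by
      rw [hxdef]
      field_simp
    rw [he]; positivity
  have hc_mono : ∀ τ : ℝ, 0 < τ → τ ≤ t → c τ ≤ c t := by
    intro τ h1 h2
    rw [hc τ, hc t]
    have hxpos : 0 < x^(1/q) := Real.rpow_pos_of_pos hx0 _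
    apply (div_le_div_iff_of_pos_right hxpos).mpr
    have hbτ := hb_nonneg τ (le_of_lt h1)
    have hble := hb_mono (mem_Ici.mpr h1.le) (mem_Ici.mpr (h1.le.trans h2)) h2
    have hτe := Real.rpow_le_rpow h1.le h2 hexp_nonneg
    have h2nn : (0:ℝ) ≤ 2^(1/q) := Real.rpow_nonneg (by norm_num) _
    calc 2^(1/q) * b τ * τ^(β-1+1/q) ≤ 2^(1/q) * b τ * t^(β-1+1/q) :=
          mul_le_mul_of_nonneg_left hτe (mul_nonneg h2nn hbτ)
      _ ≤ 2^(1/q) * b t * t^(β-1+1/q) :=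
          mul_le_mul_of_nonneg_right (mul_le_mul_of_nonneg_left hble h2nn)
            (Real.rpow_nonneg (h1.le.trans h2) _)
  have hW_ineq : ∀ τ ∈ Ioc (0:ℝ) t, W τ ≤ A + C * ∫ s in (0:ℝ)..τ, K s * (W s)^γ := by
    intro τ hτ
    have hcore := core τ hτ.1
    have hXint : (∫ s in (0:ℝ)..τ, K s * (v s)^(p*γ)) = ∫ s in (0:ℝ)..τ, K s * (W s)^γ := by
      apply intervalIntegral.integral_congr
      intro s hs
      rw [uIcc_of_le hτ.1.le] at hs
      have e : (v s)^(p*γ) = (W s)^γ := by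
        simp only [hWdef]
        rw [← Real.rpow_mul (hv_nonneg s hs.1)]
      simp only [e]
    have hXnn : 0 ≤ ∫ s in (0:ℝ)..τ, K s * (W s)^γ := by
      apply intervalIntegral.integral_nonneg hτ.1.le
      intro s hs
      exact mul_nonneg (hK_nonneg s hs.1) (Real.rpow_nonneg
        (Real.rpow_nonneg (hv_nonneg s hs.1) _) _)
    have hXnn' : 0 ≤ (∫ s in (0:ℝ)..τ, K s * (W s)^γ)^(1/p) := Real.rpow_nonneg hXnn _
    have hcτnn : 0 ≤ c τ := hct_nonneg τ hτ.1.le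
    rw [hXint] at hcore
    have hvτ : 0 ≤ v τ := hv_nonneg τ hτ.1.le
    calc W τ = (v τ)^p := rfl
      _ ≤ (a + c τ * (∫ s in (0:ℝ)..τ, K s * (W s)^γ)^(1/p))^p :=
          Real.rpow_le_rpow hvτ hcore hp0.le
      _ ≤ 2^(p-1) * (a^p + (c τ * (∫ s in (0:ℝ)..τ, K s * (W s)^γ)^(1/p))^p) :=
          stmt7_two_rpow ha.le (mul_nonneg hcτnn hXnn') hp1.le
      _ = 2^(p-1) * a^p + 2^(p-1) * (c τ)^p * (∫ s in (0:ℝ)..τ, K s * (W s)^γ) := by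
          rw [Real.mul_rpow hcτnn hXnn', ← Real.rpow_mul hXnn,
            one_div_mul_cancel hp0.ne', Real.rpow_one]
          ring
      _ ≤ A + C * ∫ s in (0:ℝ)..τ, K s * (W s)^γ := by
          rw [hAdef, hCdef]
          have hcp : (c τ)^p ≤ (c t)^p :=
            Real.rpow_le_rpow hcτnn (hc_mono τ hτ.1 hτ.2) hp0.le
          have h2p : (0:ℝ) ≤ 2^(p-1) := Real.rpow_nonneg (by norm_num) _
          have := mul_le_mul_of_nonneg_right
            (mul_le_mul_of_nonneg_left hcp h2p) hXnn
          linarith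
  have hW_cont : ContinuousOn W (Icc 0 t) :=
    (hv_cont.mono Icc_subset_Ici_self).rpow_const (fun s _ => Or.inr hp0.le)
  have hW_nonneg : ∀ s ∈ Icc (0:ℝ) t, 0 ≤ W s := fun s hs =>
    Real.rpow_nonneg (hv_nonneg s hs.1) _
  have hK_nonneg' : ∀ s ∈ Icc (0:ℝ) t, 0 ≤ K s := fun s hs => hK_nonneg s hs.1
  have hK_int : IntervalIntegrable K volume 0 t := hl_lp t ht.le
  have hbih := stmt7_bihari hA hC hγ0 hγ1 ht K W hK_cont hK_nonneg' hK_int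
    hW_cont hW_nonneg hW_ineq
  have hKint_nonneg : 0 ≤ ∫ s in (0:ℝ)..t, K s :=
    intervalIntegral.integral_nonneg ht.le (fun s hs => hK_nonneg s hs.1)
  have hut : u t = t^(β-1) * (W t)^(1/p) := by
    rw [hu_eq t ht]
    congr 1
    simp only [hWdef]
    rw [← Real.rpow_mul (hv_nonneg t ht.le), mul_one_div, div_self hp0.ne', Real.rpow_one]
  have hZnn : 0 ≤ A^(1-γ) + (1-γ)*C*(∫ s in (0:ℝ)..t, K s) := by
    have h1 := Real.rpow_nonneg hA.le (1-γ)
    have h2 : 0 ≤ (1-γ)*C*(∫ s in (0:ℝ)..t, K s) :=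
      mul_nonneg (mul_nonneg h1γ.le hC) hKint_nonneg
    linarith
  have hfinal1 : u t ≤ t^(β-1) *
      (A^(1-γ) + (1-γ)*C*(∫ s in (0:ℝ)..t, K s))^(1/(p*(1-γ))) := by
    rw [hut]
    apply mul_le_mul_of_nonneg_left _ (Real.rpow_nonneg ht.le _)
    calc (W t)^(1/p)
        ≤ ((A^(1-γ) + (1-γ)*C*(∫ s in (0:ℝ)..t, K s))^(1/(1-γ)))^(1/p) :=
          Real.rpow_le_rpow (hW_nonneg t (right_mem_Icc.mpr ht.le)) hbih (by positivity)
      _ = (A^(1-γ) + (1-γ)*C*(∫ s in (0:ℝ)..t, K s))^(1/(p*(1-γ))) := by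
          rw [← Real.rpow_mul hZnn]
          congr 1
          rw [div_mul_div_comm, one_mul, mul_comm (1-γ) p]
  have e1 : A^(1-γ) = 2^((p-1)*(1-γ)) * a^(p*(1-γ)) := by
    rw [hAdef, Real.mul_rpow (Real.rpow_nonneg (by norm_num) _) (Real.rpow_nonneg ha.le _),
      ← Real.rpow_mul (by norm_num : (0:ℝ) ≤ 2), ← Real.rpow_mul ha.le]
  have e2 : (2:ℝ)^((p-1)*(1-γ)) * 2^((p-1)*γ) = 2^(p-1) := by
    rw [← Real.rpow_add two_pos]
    congr 1
    ring
  have hZ : A^(1-γ) + (1-γ)*C*(∫ s in (0:ℝ)..t, K s)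
      = 2^((p-1)*(1-γ)) * (a^(p*(1-γ)) + (1-γ)*2^((p-1)*γ)*(c t)^p
        * ∫ s in (0:ℝ)..t, K s) := by
    rw [e1, hCdef]
    linear_combination (-((1-γ)*(c t)^p*(∫ s in (0:ℝ)..t, K s))) * e2
  have hREST : 0 ≤ a^(p*(1-γ)) + (1-γ)*2^((p-1)*γ)*(c t)^p * ∫ s in (0:ℝ)..t, K s := by
    have h1 : (0:ℝ) ≤ a^(p*(1-γ)) := Real.rpow_nonneg ha.le _
    have h2 : (0:ℝ) ≤ 2^((p-1)*γ) := Real.rpow_nonneg (by norm_num) _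
    have h3 : (0:ℝ) ≤ (c t)^p := Real.rpow_nonneg (hct_nonneg t ht.le) _
    have h4 : 0 ≤ (1-γ)*2^((p-1)*γ)*(c t)^p * ∫ s in (0:ℝ)..t, K s :=
      mul_nonneg (mul_nonneg (mul_nonneg h1γ.le h2) h3) hKint_nonneg
    linarith
  have e3 : ((2:ℝ)^((p-1)*(1-γ)))^(1/(p*(1-γ))) = 2^(1-1/p) := by
    rw [← Real.rpow_mul (by norm_num : (0:ℝ) ≤ 2)]
    congr 1
    have hne : p*(1-γ) ≠ 0 := by positivity
    field_simp
  have hKid : (∫ s in (0:ℝ)..t, K s) = ∫ s in (0:ℝ)..t, s^(p*(1-γ)*(1-β)) * l s ^ p := by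
    rw [intervalIntegral.integral_of_le ht.le, intervalIntegral.integral_of_le ht.le]
    apply setIntegral_congr_fun measurableSet_Ioc
    intro s hs
    simp only [hKdef, hLdef]
    rw [Real.mul_rpow (Real.rpow_nonneg hs.1.le _) (hl_nonneg s hs.1),
      ← Real.rpow_mul hs.1.le, show (1-γ)*(1-β)*p = p*(1-γ)*(1-β) from by ring]
  calc u t ≤ t^(β-1) * (A^(1-γ) + (1-γ)*C*(∫ s in (0:ℝ)..t, K s))^(1/(p*(1-γ))) := hfinal1
    _ = t^(β-1) * (2^((p-1)*(1-γ)) * (a^(p*(1-γ)) + (1-γ)*2^((p-1)*γ)*(c t)^p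
        * ∫ s in (0:ℝ)..t, K s))^(1/(p*(1-γ))) := by rw [hZ]
    _ = 2^(1-1/p) * t^(β-1) * (a^(p*(1-γ)) + (1-γ)*2^((p-1)*γ)*(c t)^p
        * ∫ s in (0:ℝ)..t, K s)^(1/(p*(1-γ))) := by
        rw [Real.mul_rpow (Real.rpow_nonneg (by norm_num) _) hREST, e3]
        ring
    _ = 2^(1-1/p) * t^(β-1) * (a^(p*(1-γ)) + (1-γ)*2^((p-1)*γ)*(c t)^p
        * ∫ s in (0:ℝ)..t, s^(p*(1-γ)*(1-β)) * l s ^ p)^(1/(p*(1-γ))) := by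
        rw [hKid]


/-- Corollary 2.6, case 0 < γ < 1:
`u(t) ≤ a t^{β-1} + b(t) ∫₀ᵗ (t-s)^{β-1} l(s) u(s)^γ ds` implies
`u(t) ≤ 2^{1-1/p} t^{β-1} (a^{p(1-γ)} + (1-γ) 2^{(p-1)γ} c(t)^p
  ∫₀ᵗ s^{p(1-γ)(1-β)} l(s)^p ds)^{1/(p(1-γ))}`,
where `c(t) = 2^{1/q} b(t) t^{β-1+1/q} / (qβ-q+1)^{1/q}`. -/
theorem stmt7 (a γ β p q : ℝ) (ha : 0 ≤ a) (hγ : γ ∈ Ioo (0:ℝ) 1)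
    (hβ : β ∈ Ioo (0:ℝ) 1) (hp : 1/β < p) (hq : q = p / (p - 1))
    (b : ℝ → ℝ)
    (hb_cont : ContinuousOn b (Ici 0)) (hb_mono : MonotoneOn b (Ici 0))
    (hb_nonneg : ∀ t ∈ Ici (0:ℝ), 0 ≤ b t)
    (l : ℝ → ℝ)
    (hl_nonneg : ∀ t ∈ Ioi (0:ℝ), 0 ≤ l t)
    (hl_cont : ContinuousOn (fun t => t ^ ((1 - γ) * (1 - β)) * l t) (Ioi 0))
    (hl_lp : ∀ t : ℝ, 0 ≤ t →
      IntervalIntegrable (fun s => (s ^ ((1 - γ) * (1 - β)) * l s) ^ p) volume 0 t)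
    (u : ℝ → ℝ)
    (hu_cont : ContinuousOn (fun t => t ^ (1 - β) * u t) (Ici 0))
    (hu_nonneg : ∀ t ∈ Ici (0:ℝ), 0 ≤ t ^ (1 - β) * u t)
    (hu : ∀ t ∈ Ioi (0:ℝ),
      u t ≤ a * t ^ (β - 1) + b t * ∫ s in (0:ℝ)..t, (t - s) ^ (β - 1) * (l s * u s ^ γ))
    (c : ℝ → ℝ)
    (hc : ∀ t, c t = (2:ℝ) ^ (1/q) * b t * t ^ (β - 1 + 1/q) / (q * β - q + 1) ^ (1/q)) :
    ∀ t ∈ Ioi (0:ℝ),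
      u t ≤ (2:ℝ) ^ (1 - 1/p) * t ^ (β - 1) *
        (a ^ (p * (1 - γ)) + (1 - γ) * (2:ℝ) ^ ((p - 1) * γ) * c t ^ p *
          ∫ s in (0:ℝ)..t, s ^ (p * (1 - γ) * (1 - β)) * l s ^ p)
        ^ (1 / (p * (1 - γ))) := by

  intro t ht
  rw [mem_Ioi] at ht
  have hp1 : 1 < p := lt_trans (by rw [lt_div_iff₀ hβ.1]; linarith [hβ.2]) hp
  have hp0 : 0 < p := by linarith
  have h1γ : 0 < 1 - γ := by linarith [hγ.2]
  set R := (1-γ) * (2:ℝ)^((p-1)*γ) * (c t)^p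
    * ∫ s in (0:ℝ)..t, s^(p*(1-γ)*(1-β)) * l s^p with hRdef
  set F := fun ε : ℝ => (2:ℝ)^(1-1/p) * t^(β-1) * ((a+ε)^(p*(1-γ)) + R)^(1/(p*(1-γ)))
    with hFdef
  have key : ∀ ε : ℝ, 0 < ε → u t ≤ F ε := by
    intro ε hε
    have hu' : ∀ τ ∈ Ioi (0:ℝ), u τ ≤ (a+ε) * τ^(β-1)
        + b τ * ∫ s in (0:ℝ)..τ, (τ-s)^(β-1) * (l s * u s^γ) := by
      intro τ hτ
      have h1 := hu τ hτ
      have h2 : 0 ≤ ε * τ^(β-1) :=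
        mul_nonneg hε.le (Real.rpow_nonneg (le_of_lt hτ) _)
      nlinarith
    have := stmt7_main (a+ε) γ β p q (by linarith) hγ hβ hp hq b hb_cont hb_mono
      hb_nonneg l hl_nonneg hl_cont hl_lp u hu_cont hu_nonneg hu' c hc t ht
    simpa [hFdef, hRdef] using this
  have hcont : ContinuousWithinAt F (Ioi 0) 0 := by
    apply ContinuousAt.continuousWithinAt
    apply ContinuousAt.mul continuousAt_const
    apply ContinuousAt.rpow_const
    · apply ContinuousAt.add ?_ continuousAt_const
      exact ContinuousAt.rpow_const (continuousAt_const.add continuousAt_id)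
        (Or.inr (by positivity))
    · right
      positivity
  have hev : ∀ᶠ ε in nhdsWithin (0:ℝ) (Ioi 0), u t ≤ F ε :=
    eventually_nhdsWithin_of_forall (fun ε hε => key ε hε)
  have hlim := ge_of_tendsto hcont.tendsto hev
  have hF0 : F 0 = (2:ℝ)^(1-1/p) * t^(β-1) * (a^(p*(1-γ)) + R)^(1/(p*(1-γ))) := by
    simp [hFdef]
  rw [hF0] at hlim
  simpa [hRdef] using hlim
end
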